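/- Consider the CLVR iterates and suppose A E[x̃_k] ≠ b. Let u = x* and let v ∈ ℝⁿ be determined by ‖A E[x̃_k] − b‖ · v = ‖y*‖ (A E[x̃_k] − b). Then for all k ≥ 1: (i) ‖A E[x̃_k] − b‖ · ‖y*‖ ≤ (γ‖u − x₀‖² + 4‖v − y₀‖²/γ)/(2 A_k); (ii) (cᵀE[x̃_k] + r(E[x̃_k])) − (cᵀx* + r(x*)) ≥ −(γ‖u − x₀‖² + 4‖v − y₀‖²/γ)/(2 A_k); and (iii) (cᵀE[x̃_k] + r(E[x̃_k])) − (cᵀx* + r(x*)) ≤ (γ‖u − x₀‖² + 4‖v − y₀‖²/γ)/A_k, where y₀ = 0 and expectations are over the i.i.d. uniform random block indices. -/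

import Mathlib

open scoped RealInnerProductSpace BigOperators

set_option maxHeartbeats 1000000

/-- Matrix–vector product into Euclidean space. -/
noncomputable def mv {n d : ℕ} (A : Matrix (Fin n) (Fin d) ℝ)
    (x : EuclideanSpace ℝ (Fin d)) : EuclideanSpace ℝ (Fin n) :=
  WithLp.toLp 2 (fun i => ∑ j, A i j * x j)

/-- Transposed matrix–vector product. -/
noncomputable def mvT {n d : ℕ} (A : Matrix (Fin n) (Fin d) ℝ)
    (y : EuclideanSpace ℝ (Fin n)) : EuclideanSpace ℝ (Fin d) :=
  WithLp.toLp 2 (fun j => ∑ i, A i j * y i)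

/-- Extension of a finite index tuple `js : Fin k → Fin m` (the realized random blocks
`j₁, …, j_k`) to an infinite index sequence. -/
def pad {m : ℕ} (hm : 0 < m) (k : ℕ) (js : Fin k → Fin m) : ℕ → Fin m :=
  fun t => if h : t < k then js ⟨t, h⟩ else ⟨0, hm⟩

/-- Expectation of a real-valued quantity over the i.i.d. uniform block indices
`j₁, …, j_k`. -/
noncomputable def expE {m : ℕ} (hm : 0 < m) (k : ℕ) (f : (ℕ → Fin m) → ℝ) : ℝ :=
  ((m : ℝ) ^ k)⁻¹ * ∑ js : Fin k → Fin m, f (pad hm k js)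

/-- Expectation of a vector-valued quantity over the i.i.d. uniform block indices
`j₁, …, j_k`. -/
noncomputable def expVec {m : ℕ} (hm : 0 < m) (k : ℕ) {E : Type*}
    [AddCommMonoid E] [Module ℝ E] (f : (ℕ → Fin m) → E) : E :=
  ((m : ℝ) ^ k)⁻¹ • ∑ js : Fin k → Fin m, f (pad hm k js)


namespace CLVR

lemma inner_eq_sum {d : ℕ} (x y : EuclideanSpace ℝ (Fin d)) : ⟪x, y⟫ = ∑ i, x i * y i := by
  simp [PiLp.inner_apply, RCLike.inner_apply, mul_comm]

lemma normsq_eq_sum {d : ℕ} (x : EuclideanSpace ℝ (Fin d)) : ‖x‖^2 = ∑ i, (x i)^2 := by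
  rw [← real_inner_self_eq_norm_sq, inner_eq_sum]; simp [sq]

section mvlem
variable {n d : ℕ} (A : Matrix (Fin n) (Fin d) ℝ)

lemma mv_sub (x x' : EuclideanSpace ℝ (Fin d)) : mv A (x - x') = mv A x - mv A x' := by
  ext i
  simp [mv, mul_sub, Finset.sum_sub_distrib]

lemma mv_smul (t : ℝ) (x : EuclideanSpace ℝ (Fin d)) : mv A (t • x) = t • mv A x := by
  ext i
  simp only [mv, PiLp.smul_apply, smul_eq_mul, Finset.mul_sum]
  congr 1; ext j; ring

lemma mv_sum {ι : Type*} (s : Finset ι) (f : ι → EuclideanSpace ℝ (Fin d)) :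
    mv A (∑ i ∈ s, f i) = ∑ i ∈ s, mv A (f i) := by
  classical
  induction s using Finset.induction with
  | empty => ext i; simp [mv]
  | insert a s h ih =>
      rw [Finset.sum_insert h, Finset.sum_insert h, ← ih]
      ext i
      simp [mv, mul_add, Finset.sum_add_distrib]

lemma mvT_adj (y : EuclideanSpace ℝ (Fin n)) (x : EuclideanSpace ℝ (Fin d)) :
    ⟪x, mvT A y⟫ = ⟪y, mv A x⟫ := by
  rw [inner_eq_sum, inner_eq_sum]
  simp only [mvT, mv, Finset.mul_sum, Finset.sum_mul]
  rw [Finset.sum_comm]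
  congr 1; ext j; congr 1; ext i; ring

end mvlem

section blk
variable {n m : ℕ} (S : Fin n → Fin m)

noncomputable def Pblk (j : Fin m) (w : EuclideanSpace ℝ (Fin n)) : EuclideanSpace ℝ (Fin n) :=
  WithLp.toLp 2 (fun i => if S i = j then w i else 0)

lemma normsq_Pblk (j : Fin m) (w : EuclideanSpace ℝ (Fin n)) :
    ‖Pblk S j w‖^2 = ∑ i ∈ Finset.univ.filter (fun i => S i = j), (w i)^2 := by
  rw [normsq_eq_sum]
  rw [← Finset.sum_filter_add_sum_filter_not Finset.univ (fun i => S i = j)]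
  have h1 : ∀ i ∈ Finset.univ.filter (fun i => S i = j), (Pblk S j w i)^2 = (w i)^2 := by
    intro i hi; simp at hi; simp [Pblk, hi]
  have h2 : ∀ i ∈ Finset.univ.filter (fun i => ¬ S i = j), (Pblk S j w i)^2 = 0 := by
    intro i hi; simp at hi; simp [Pblk, hi]
  rw [Finset.sum_congr rfl h1, Finset.sum_congr rfl h2]
  simp

lemma sum_normsq_Pblk (w : EuclideanSpace ℝ (Fin n)) :
    ∑ j : Fin m, ‖Pblk S j w‖^2 = ‖w‖^2 := by
  simp_rw [normsq_Pblk]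
  rw [Finset.sum_fiberwise Finset.univ S (fun i => (w i)^2), normsq_eq_sum]

lemma sum_inner_Pblk (q w : EuclideanSpace ℝ (Fin n)) :
    ∑ j : Fin m, ⟪q, Pblk S j w⟫ = ⟪q, w⟫ := by
  simp_rw [inner_eq_sum]
  rw [← Finset.sum_fiberwise Finset.univ S (fun i => q i * w i)]
  refine Finset.sum_congr rfl fun j _ => ?_
  rw [← Finset.sum_filter_add_sum_filter_not Finset.univ (fun i => S i = j)
    (fun i => q i * Pblk S j w i)]
  have h1 : ∀ i ∈ Finset.univ.filter (fun i => S i = j), q i * Pblk S j w i = q i * w i := by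
    intro i hi; simp at hi; simp [Pblk, hi]
  have h2 : ∀ i ∈ Finset.univ.filter (fun i => ¬ S i = j), q i * Pblk S j w i = 0 := by
    intro i hi; simp at hi; simp [Pblk, hi]
  rw [Finset.sum_congr rfl h1, Finset.sum_congr rfl h2]
  simp

lemma inner_Pblk_right (j : Fin m) (z u : EuclideanSpace ℝ (Fin n))
    (hz : ∀ i, S i ≠ j → z i = 0) : ⟪z, u⟫ = ⟪z, Pblk S j u⟫ := by
  rw [inner_eq_sum, inner_eq_sum]
  refine Finset.sum_congr rfl fun i _ => ?_
  by_cases h : S i = j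
  · simp [Pblk, h]
  · simp [Pblk, h, hz i h]

lemma inner_Pblk_self (j : Fin m) (w : EuclideanSpace ℝ (Fin n)) :
    ⟪Pblk S j w, w⟫ = ‖Pblk S j w‖^2 := by
  rw [inner_eq_sum, normsq_eq_sum]
  refine Finset.sum_congr rfl fun i _ => ?_
  by_cases h : S i = j <;> simp [Pblk, h, sq]

end blk
/-- strong convexity combination identity for the quadratic -/
lemma quad_combo {E : Type*} [NormedAddCommGroup E] [InnerProductSpace ℝ E]
    (p q z : E) (t s : ℝ) (hts : t + s = 1) :
    ‖t • p + s • q - z‖^2 = t * ‖p - z‖^2 + s * ‖q - z‖^2 - t * s * ‖p - q‖^2 := by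
  have hz : t • p + s • q - z = t • (p - z) + s • (q - z) := by
    calc t • p + s • q - z = t • p + s • q - (t + s) • z := by rw [hts, one_smul]
    _ = t • (p - z) + s • (q - z) := by rw [add_smul, smul_sub, smul_sub]; abel
  have hpq : p - q = (p - z) - (q - z) := by abel
  rw [hz, hpq]
  generalize (p - z) = u
  generalize (q - z) = v
  rw [norm_add_sq_real, norm_sub_sq_real, norm_smul, norm_smul,
    real_inner_smul_left, real_inner_smul_right, Real.norm_eq_abs, Real.norm_eq_abs,
    mul_pow, mul_pow, sq_abs, sq_abs]
  linear_combination (t * ‖u‖^2 + s * ‖v‖^2) * hts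

/-- excess of a strongly convex function above its constrained minimum -/
lemma min_excess {E : Type*} [NormedAddCommGroup E] [InnerProductSpace ℝ E]
    {X : Set E} (hX : Convex ℝ X) {φ : E → ℝ} {μ : ℝ} (hμ : 0 ≤ μ)
    (hsc : ∀ p ∈ X, ∀ q ∈ X, ∀ t s : ℝ, 0 ≤ t → 0 ≤ s → t + s = 1 →
      φ (t • p + s • q) ≤ t * φ p + s * φ q - μ/2 * (t*s) * ‖p - q‖^2)
    {x₁ : E} (hx₁ : x₁ ∈ X) (hmin : ∀ z ∈ X, φ x₁ ≤ φ z)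
    {x' : E} (hx' : x' ∈ X) : φ x₁ + μ/2 * ‖x' - x₁‖^2 ≤ φ x' := by
  set C := μ/2 * ‖x' - x₁‖^2 with hC
  have hC0 : 0 ≤ C := by positivity
  have hgap0 : 0 ≤ φ x' - φ x₁ := sub_nonneg.2 (hmin x' hx')
  have key : ∀ t : ℝ, 0 < t → t ≤ 1 → (1 - t) * C ≤ φ x' - φ x₁ := by
    intro t ht0 ht1
    have hmem : t • x' + (1 - t) • x₁ ∈ X :=
      hX hx' hx₁ (le_of_lt ht0) (by linarith) (by ring)
    have h1 := hsc x' hx' x₁ hx₁ t (1 - t) (le_of_lt ht0) (by linarith) (by ring)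
    have h2 := hmin _ hmem
    have h3 : φ x₁ ≤ t * φ x' + (1 - t) * φ x₁ - μ/2 * (t*(1-t)) * ‖x' - x₁‖^2 :=
      le_trans h2 h1
    have h4 : t * ((1 - t) * C) ≤ t * (φ x' - φ x₁) := by
      rw [hC]; nlinarith [h3]
    exact le_of_mul_le_mul_left (by linarith [h4]) ht0
  -- take t → 0
  have final : C ≤ φ x' - φ x₁ := by
    refine le_of_forall_pos_le_add fun ε hε => ?_
    rcases le_or_gt C ε with h | h
    · linarith
    · have hCpos : 0 < C := lt_trans hε h
      have ht0 : 0 < ε / C := div_pos hε hCpos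
      have ht1 : ε / C ≤ 1 := by
        rw [div_le_one hCpos]; linarith
      have hk := key (ε / C) ht0 ht1
      have : (1 - ε / C) * C = C - ε := by field_simp
      linarith
  linarith

lemma update_piSplit {k m : ℕ} (i0 : Fin k) (rest : {j : Fin k // j ≠ i0} → Fin m)
    (v j : Fin m) :
    Function.update ((Equiv.piSplitAt i0 (fun _ => Fin m)).symm (v, rest)) i0 j
      = (Equiv.piSplitAt i0 (fun _ => Fin m)).symm (j, rest) := by
  funext t
  by_cases h : t = i0
  · subst h; simp [Equiv.piSplitAt]
  · simp [Function.update, h, Equiv.piSplitAt, dif_neg h]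

lemma sum_update {k m : ℕ} (i0 : Fin k) (f : (Fin k → Fin m) → ℝ) :
    ∑ js : Fin k → Fin m, ∑ j : Fin m, f (Function.update js i0 j)
      = (m : ℝ) * ∑ js : Fin k → Fin m, f js := by
  classical
  rw [← Equiv.sum_comp (Equiv.piSplitAt i0 (fun _ => Fin m)).symm
    (fun js => ∑ j : Fin m, f (Function.update js i0 j))]
  rw [← Equiv.sum_comp (Equiv.piSplitAt i0 (fun _ => Fin m)).symm f]
  rw [Fintype.sum_prod_type, Fintype.sum_prod_type]
  simp_rw [update_piSplit]
  simp_rw [Finset.sum_const, Finset.card_univ, Fintype.card_fin, nsmul_eq_mul]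
  rw [Finset.sum_comm]

lemma step_facts {σ γ Lhat : ℝ} {m : ℕ} (hm : 0 < m) (hσ : 0 ≤ σ) (hγ : 0 < γ)
    (hLhat : 0 < Lhat) {a Aseq : ℕ → ℝ} (hA0 : Aseq 0 = 0)
    (ha1 : a 1 = 1 / (Real.sqrt 2 * Lhat * m))
    (harec : ∀ k, 1 ≤ k → a (k+1) = Real.sqrt (1 + σ * Aseq k / γ) / (Real.sqrt 2 * Lhat * m))
    (hArec : ∀ k, Aseq (k+1) = Aseq k + a (k+1)) :
    (∀ k, 0 ≤ Aseq k) ∧ (∀ k, 0 < a (k+1)) ∧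
    (∀ k, γ + σ * Aseq k = 2*γ*Lhat^2*m^2*(a (k+1))^2) ∧
    (∀ k, a (k+1) ≤ a (k+2)) := by
  have hd : (0:ℝ) < Real.sqrt 2 * Lhat * m := by
    have : (0:ℝ) < Real.sqrt 2 := Real.sqrt_pos.2 (by norm_num)
    have hm' : (0:ℝ) < m := by exact_mod_cast hm
    positivity
  have haform : ∀ k, a (k+1) = Real.sqrt (1 + σ * Aseq k / γ) / (Real.sqrt 2 * Lhat * m) := by
    intro k
    rcases Nat.eq_zero_or_pos k with h | h
    · subst h; rw [ha1, hA0]; norm_num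
    · exact harec k h
  have hAnn : ∀ k, 0 ≤ Aseq k := by
    intro k
    induction k with
    | zero => rw [hA0]
    | succ j ih =>
        rw [hArec j, haform j]
        have harg : (0:ℝ) ≤ 1 + σ * Aseq j / γ := by positivity
        have : 0 ≤ Real.sqrt (1 + σ * Aseq j / γ) / (Real.sqrt 2 * Lhat * m) := by positivity
        linarith
  have hargpos : ∀ k, (0:ℝ) < 1 + σ * Aseq k / γ := by
    intro k
    have := hAnn k
    have : 0 ≤ σ * Aseq k / γ := by positivity
    linarith
  have hapos : ∀ k, 0 < a (k+1) := by
    intro k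
    rw [haform k]
    exact div_pos (Real.sqrt_pos.2 (hargpos k)) hd
  have hkey : ∀ k, γ + σ * Aseq k = 2*γ*Lhat^2*m^2*(a (k+1))^2 := by
    intro k
    rw [haform k, div_pow, Real.sq_sqrt (le_of_lt (hargpos k))]
    have h2 : (Real.sqrt 2 * Lhat * m)^2 = 2 * Lhat^2 * m^2 := by
      rw [mul_pow, mul_pow, Real.sq_sqrt (by norm_num : (0:ℝ) ≤ 2)]
    rw [h2]
    field_simp
  have hmono : ∀ k, a (k+1) ≤ a (k+2) := by
    intro k
    rw [haform k, haform (k+1)]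
    have hA : Aseq k ≤ Aseq (k+1) := by
      rw [hArec k]; have := hapos k; linarith
    gcongr
  exact ⟨hAnn, hapos, hkey, hmono⟩

lemma Aseq_eq_sum {a Aseq : ℕ → ℝ} (hA0 : Aseq 0 = 0)
    (hArec : ∀ k, Aseq (k+1) = Aseq k + a (k+1)) :
    ∀ k, Aseq k = ∑ i ∈ Finset.Icc 1 k, a i := by
  intro k
  induction k with
  | zero => simpa using hA0
  | succ j ih =>
      rw [hArec j, ih, Finset.sum_Icc_succ_top (by omega : 1 ≤ j + 1)]

lemma pad_update_ne {m k : ℕ} (hm : 0 < m) (js : Fin k → Fin m) (i0 : Fin k) (j : Fin m)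
    {t : ℕ} (ht : t ≠ (i0 : ℕ)) :
    pad hm k (Function.update js i0 j) t = pad hm k js t := by
  unfold pad
  by_cases h : t < k
  · rw [dif_pos h, dif_pos h]
    have : (⟨t, h⟩ : Fin k) ≠ i0 := by
      intro hc
      exact ht (by rw [← hc])
    rw [Function.update_of_ne this]
  · rw [dif_neg h, dif_neg h]

lemma pad_update_self {m k : ℕ} (hm : 0 < m) (js : Fin k → Fin m) (i0 : Fin k) (j : Fin m) :
    pad hm k (Function.update js i0 j) (i0 : ℕ) = j := by
  unfold pad
  rw [dif_pos i0.isLt]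
  have : (⟨(i0:ℕ), i0.isLt⟩ : Fin k) = i0 := by
    apply Fin.ext; rfl
  rw [this, Function.update_self]


end CLVR


namespace CLVR

lemma sum_Icc_tel (f : ℕ → ℝ) (k : ℕ) :
    ∑ i ∈ Finset.Icc 1 k, (f (i-1) - f i) = f 0 - f k := by
  have h := Finset.sum_range_sub' f k
  rw [← h]
  refine Finset.sum_nbij' (fun i => i - 1) (fun t => t + 1) ?_ ?_ ?_ ?_ ?_ <;>
    intros <;> simp_all [Finset.mem_Icc, Finset.mem_range] <;> omega

lemma sum_Icc_two_shift (g : ℕ → ℝ) (k : ℕ) :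
    ∑ i ∈ Finset.Icc 2 k, g (i-1) = ∑ i ∈ Finset.Icc 1 (k-1), g i := by
  refine Finset.sum_nbij' (fun i => i - 1) (fun t => t + 1) ?_ ?_ ?_ ?_ ?_ <;>
    intros <;> simp_all [Finset.mem_Icc] <;> omega

lemma sum_Icc_split_top (f : ℕ → ℝ) (k : ℕ) (hk : 1 ≤ k) :
    ∑ i ∈ Finset.Icc 1 k, f i = ∑ i ∈ Finset.Icc 1 (k-1), f i + f k := by
  obtain ⟨j, rfl⟩ : ∃ j, k = j + 1 := ⟨k - 1, by omega⟩
  rw [Finset.sum_Icc_succ_top (by omega : 1 ≤ j + 1)]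
  simp


set_option maxHeartbeats 1000000 in
lemma clvr_master
    (n d m : ℕ) (hm : 0 < m)
    (A : Matrix (Fin n) (Fin d) ℝ) (b : EuclideanSpace ℝ (Fin n))
    (c : EuclideanSpace ℝ (Fin d))
    (X : Set (EuclideanSpace ℝ (Fin d))) (hXconv : Convex ℝ X)
    (r : EuclideanSpace ℝ (Fin d) → ℝ) (σ : ℝ) (hσ : 0 ≤ σ)
    (hrconv : ConvexOn ℝ Set.univ r) (hrstrong : StrongConvexOn X σ r)
    (S : Fin n → Fin m)
    (Lhat : ℝ) (hLhat : 0 < Lhat)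
    (hLhatBound : ∀ (j : Fin m) (z : EuclideanSpace ℝ (Fin d)),
      Real.sqrt (∑ i ∈ Finset.univ.filter (fun i => S i = j), (mv A z i) ^ 2) ≤ Lhat * ‖z‖)
    (γ : ℝ) (hγ : 0 < γ)
    (xstar : EuclideanSpace ℝ (Fin d)) (hxstarX : xstar ∈ X) (hfeas : mv A xstar = b)
    (a Aseq : ℕ → ℝ)
    (ha0 : a 0 = 0) (hA0 : Aseq 0 = 0)
    (ha1 : a 1 = 1 / (Real.sqrt 2 * Lhat * m))
    (harec : ∀ k, 1 ≤ k →
      a (k + 1) = Real.sqrt (1 + σ * Aseq k / γ) / (Real.sqrt 2 * Lhat * m))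
    (hArec : ∀ k, Aseq (k + 1) = Aseq k + a (k + 1))
    (x : ℕ → (ℕ → Fin m) → EuclideanSpace ℝ (Fin d))
    (y ybar : ℕ → (ℕ → Fin m) → EuclideanSpace ℝ (Fin n))
    (x0 : EuclideanSpace ℝ (Fin d)) (y0 : EuclideanSpace ℝ (Fin n))
    (hx0X : x0 ∈ X) (hx0 : ∀ ω, x 0 ω = x0)
    (hy0 : ∀ ω, y 0 ω = y0) (hybar0 : ∀ ω, ybar 0 ω = y0)
    (hxmin : ∀ k, 1 ≤ k → ∀ ω, x k ω ∈ X ∧ ∀ x' ∈ X,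
      ((∑ i ∈ Finset.Icc 1 k, a i * (⟪x k ω, mvT A (ybar (i - 1) ω) + c⟫ + r (x k ω)))
          + γ / 2 * ‖x k ω - x0‖ ^ 2)
        ≤ ((∑ i ∈ Finset.Icc 1 k, a i * (⟪x', mvT A (ybar (i - 1) ω) + c⟫ + r x'))
          + γ / 2 * ‖x' - x0‖ ^ 2))
    (hyupd : ∀ k, 1 ≤ k → ∀ ω, ∀ i : Fin n,
      y k ω i = if S i = ω (k - 1)
        then y (k - 1) ω i + γ * m * a k * (mv A (x k ω) i - b i)
        else y (k - 1) ω i)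
    (hybar : ∀ k, 1 ≤ k → ∀ ω,
      ybar k ω = y k ω + (m * a k / a (k + 1)) • (y k ω - y (k - 1) ω))
    (xt : ℕ → (ℕ → Fin m) → EuclideanSpace ℝ (Fin d))
    (hxt : ∀ k ω, xt k ω = (Aseq k)⁻¹ • ∑ i ∈ Finset.Icc 1 k, a i • x i ω)
    (k : ℕ) (hk : 1 ≤ k) (w : EuclideanSpace ℝ (Fin n)) :
    expVec hm k (fun ω => xt k ω) ∈ X ∧
    Aseq k * ((⟪c, expVec hm k (fun ω => xt k ω)⟫ + r (expVec hm k (fun ω => xt k ω))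
        - (⟪c, xstar⟫ + r xstar)) + ⟪w, mv A (expVec hm k (fun ω => xt k ω)) - b⟫)
      ≤ γ/2 * ‖xstar - x0‖^2 + ‖w - y0‖^2/(2*γ) := by
  obtain ⟨hAnn, hapos, hkey, hamono⟩ := step_facts hm hσ hγ hLhat hA0 ha1 harec hArec
  have hAeq := Aseq_eq_sum hA0 hArec
  have hmR : (0:ℝ) < m := by exact_mod_cast hm
  have apos : ∀ i, 1 ≤ i → 0 < a i := by
    intro i hi
    obtain ⟨j, rfl⟩ : ∃ j, i = j + 1 := ⟨i - 1, by omega⟩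
    exact hapos j
  have anneg : ∀ i, 0 ≤ a i := by
    intro i
    rcases Nat.eq_zero_or_pos i with h | h
    · simp [h, ha0]
    · exact le_of_lt (apos i h)
  have akey : ∀ i, 1 ≤ i → γ + σ * Aseq (i-1) = 2*γ*Lhat^2*m^2*(a i)^2 := by
    intro i hi
    obtain ⟨j, rfl⟩ : ∃ j, i = j + 1 := ⟨i - 1, by omega⟩
    simpa using hkey j
  have amono' : ∀ i, 1 ≤ i → a i ≤ a (i+1) := by
    intro i hi
    obtain ⟨j, rfl⟩ : ∃ j, i = j + 1 := ⟨i - 1, by omega⟩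
    exact hamono j
  have hAk : 0 < Aseq k := by
    obtain ⟨j, rfl⟩ : ∃ j, k = j + 1 := ⟨k - 1, by omega⟩
    have h1 := hapos j
    have h2 := hAnn j
    rw [hArec j]
    linarith
  have mupos : ∀ t : ℕ, 0 < γ + σ * Aseq t := by
    intro t
    have h1 := hAnn t
    have : 0 ≤ σ * Aseq t := mul_nonneg hσ h1
    linarith
  have xmem : ∀ i (ω : ℕ → Fin m), x i ω ∈ X := by
    intro i ω
    rcases Nat.eq_zero_or_pos i with h | h
    · rw [h, hx0]; exact hx0X
    · exact (hxmin i h ω).1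
  -- strong convexity of the dual-averaging objective
  have psi_sc : ∀ (i:ℕ) (ω : ℕ → Fin m), ∀ p ∈ X, ∀ q ∈ X, ∀ t s : ℝ,
      0 ≤ t → 0 ≤ s → t + s = 1 →
      ((∑ j ∈ Finset.Icc 1 i, a j * (⟪t•p+s•q, mvT A (ybar (j-1) ω) + c⟫ + r (t•p+s•q)))
          + γ / 2 * ‖t•p+s•q - x0‖^2)
        ≤ t * ((∑ j ∈ Finset.Icc 1 i, a j * (⟪p, mvT A (ybar (j-1) ω) + c⟫ + r p))
            + γ / 2 * ‖p - x0‖^2)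
          + s * ((∑ j ∈ Finset.Icc 1 i, a j * (⟪q, mvT A (ybar (j-1) ω) + c⟫ + r q))
            + γ / 2 * ‖q - x0‖^2)
          - (γ + σ * Aseq i)/2 * (t*s) * ‖p - q‖^2 := by
    intro i ω p hp q hq t s ht hs hts
    have hquad := quad_combo p q x0 t s hts
    have hr := hrstrong.2 hp hq ht hs hts
    simp only [smul_eq_mul] at hr
    have hterm : ∀ j ∈ Finset.Icc 1 i,
        a j * (⟪t•p+s•q, mvT A (ybar (j-1) ω) + c⟫ + r (t•p+s•q))
          ≤ t * (a j * (⟪p, mvT A (ybar (j-1) ω) + c⟫ + r p))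
            + s * (a j * (⟪q, mvT A (ybar (j-1) ω) + c⟫ + r q))
            - a j * (t * s * (σ / 2 * ‖p - q‖^2)) := by
      intro j _
      have hlin : ⟪t•p+s•q, mvT A (ybar (j-1) ω) + c⟫
          = t * ⟪p, mvT A (ybar (j-1) ω) + c⟫ + s * ⟪q, mvT A (ybar (j-1) ω) + c⟫ := by
        rw [inner_add_left, real_inner_smul_left, real_inner_smul_left]
      have h2 : a j * (⟪t•p+s•q, mvT A (ybar (j-1) ω) + c⟫ + r (t•p+s•q))
          ≤ a j * (t * (⟪p, mvT A (ybar (j-1) ω) + c⟫ + r p)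
              + s * (⟪q, mvT A (ybar (j-1) ω) + c⟫ + r q)
              - t * s * (σ / 2 * ‖p - q‖^2)) := by
        apply mul_le_mul_of_nonneg_left ?_ (anneg j)
        rw [hlin]
        linarith [hr]
      calc a j * (⟪t•p+s•q, mvT A (ybar (j-1) ω) + c⟫ + r (t•p+s•q)) ≤ _ := h2
      _ = t * (a j * (⟪p, mvT A (ybar (j-1) ω) + c⟫ + r p))
            + s * (a j * (⟪q, mvT A (ybar (j-1) ω) + c⟫ + r q))
            - a j * (t * s * (σ / 2 * ‖p - q‖^2)) := by ring
    have hsum := Finset.sum_le_sum hterm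
    rw [Finset.sum_sub_distrib, Finset.sum_add_distrib, ← Finset.mul_sum, ← Finset.mul_sum,
      ← Finset.sum_mul, ← hAeq i] at hsum
    have hfin := add_le_add_left hsum (γ / 2 * ‖t•p+s•q - x0‖^2)
    rw [hquad] at hfin
    rw [hquad]
    refine le_trans hfin (le_of_eq ?_)
    ring
  -- excess above the minimum
  have excess : ∀ (i:ℕ) (ω : ℕ → Fin m), ∀ z ∈ X,
      ((∑ j ∈ Finset.Icc 1 i, a j * (⟪x i ω, mvT A (ybar (j-1) ω) + c⟫ + r (x i ω)))
          + γ / 2 * ‖x i ω - x0‖^2) + (γ + σ * Aseq i)/2 * ‖z - x i ω‖^2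
        ≤ ((∑ j ∈ Finset.Icc 1 i, a j * (⟪z, mvT A (ybar (j-1) ω) + c⟫ + r z))
          + γ / 2 * ‖z - x0‖^2) := by
    intro i ω z hz
    rcases Nat.eq_zero_or_pos i with h0 | h0
    · subst h0
      have he : Finset.Icc 1 0 = (∅ : Finset ℕ) := by
        apply Finset.Icc_eq_empty; omega
      rw [he, hx0 ω, hA0]
      simp
    · have hx := (hxmin i h0 ω).1
      have hmin := (hxmin i h0 ω).2
      refine min_excess (X := X)
        (φ := fun z => (∑ j ∈ Finset.Icc 1 i, a j * (⟪z, mvT A (ybar (j-1) ω) + c⟫ + r z))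
          + γ / 2 * ‖z - x0‖^2) hXconv (le_of_lt (mupos i)) ?_ hx ?_ hz
      · exact psi_sc i ω
      · exact hmin
  have adapt : ∀ i : ℕ,
      (∀ ω ω' : ℕ → Fin m, (∀ t, t + 1 < i → ω t = ω' t) → x i ω = x i ω')
      ∧ (∀ ω ω' : ℕ → Fin m, (∀ t, t < i → ω t = ω' t) → y i ω = y i ω')
      ∧ (∀ ω ω' : ℕ → Fin m, (∀ t, t < i → ω t = ω' t) → ybar i ω = ybar i ω') := by
    intro i
    induction i using Nat.strong_induction_on with
    | _ i IH =>
      match i with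
      | 0 =>
        exact ⟨fun ω ω' _ => by rw [hx0, hx0], fun ω ω' _ => by rw [hy0, hy0],
          fun ω ω' _ => by rw [hybar0, hybar0]⟩
      | (j+1) =>
        have hxad : ∀ ω ω' : ℕ → Fin m, (∀ t, t + 1 < j+1 → ω t = ω' t)
            → x (j+1) ω = x (j+1) ω' := by
          intro ω ω' hag
          have hPsieq : ∀ z : EuclideanSpace ℝ (Fin d),
              (∑ l ∈ Finset.Icc 1 (j+1), a l * (⟪z, mvT A (ybar (l-1) ω) + c⟫ + r z))
                = (∑ l ∈ Finset.Icc 1 (j+1), a l * (⟪z, mvT A (ybar (l-1) ω') + c⟫ + r z)) := by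
            intro z
            refine Finset.sum_congr rfl fun l hl => ?_
            rw [Finset.mem_Icc] at hl
            rw [(IH (l-1) (by omega)).2.2 ω ω' (fun t ht => hag t (by omega))]
          have h1 := hxmin (j+1) (by omega) ω
          have h2 := hxmin (j+1) (by omega) ω'
          have e1 := excess (j+1) ω (x (j+1) ω') h2.1
          have e2 := excess (j+1) ω' (x (j+1) ω) h1.1
          rw [← hPsieq (x (j+1) ω), ← hPsieq (x (j+1) ω')] at e2
          have hnorm : ‖x (j+1) ω' - x (j+1) ω‖^2 = ‖x (j+1) ω - x (j+1) ω'‖^2 := by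
            rw [← norm_neg]; congr 1; abel
          rw [hnorm] at e1
          have hsq : ‖x (j+1) ω - x (j+1) ω'‖^2 ≤ 0 := by
            have hmu := mupos (j+1)
            nlinarith [e1, e2]
          have : ‖x (j+1) ω - x (j+1) ω'‖ = 0 := by
            have h0 := sq_nonneg ‖x (j+1) ω - x (j+1) ω'‖
            have : ‖x (j+1) ω - x (j+1) ω'‖^2 = 0 := le_antisymm hsq h0
            exact pow_eq_zero_iff (by norm_num) |>.1 this
          have := norm_eq_zero.1 this
          exact sub_eq_zero.1 this
        have hyad : ∀ ω ω' : ℕ → Fin m, (∀ t, t < j+1 → ω t = ω' t)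
            → y (j+1) ω = y (j+1) ω' := by
          intro ω ω' hag
          have hyj : y j ω = y j ω' := (IH j (by omega)).2.1 ω ω' (fun t ht => hag t (by omega))
          have hxj : x (j+1) ω = x (j+1) ω' := hxad ω ω' (fun t ht => hag t (by omega))
          ext l
          rw [hyupd (j+1) (by omega) ω l, hyupd (j+1) (by omega) ω' l]
          simp only [Nat.add_sub_cancel]
          rw [hag j (by omega), hyj, hxj]
        refine ⟨hxad, hyad, ?_⟩
        intro ω ω' hag
        rw [hybar (j+1) (by omega) ω, hybar (j+1) (by omega) ω']
        simp only [Nat.add_sub_cancel]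
        rw [hyad ω ω' hag, (IH j (by omega)).2.1 ω ω' (fun t ht => hag t (by omega))]
  have primal : ∀ ω : ℕ → Fin m,
      (∑ i ∈ Finset.Icc 1 k, (a i * (⟪x i ω, mvT A (ybar (i-1) ω) + c⟫ + r (x i ω))
          + (γ + σ * Aseq (i-1))/2 * ‖x i ω - x (i-1) ω‖^2))
        + (γ + σ * Aseq k)/2 * ‖xstar - x k ω‖^2
      ≤ (∑ j ∈ Finset.Icc 1 k, a j * (⟪xstar, mvT A (ybar (j-1) ω) + c⟫ + r xstar))
          + γ / 2 * ‖xstar - x0‖^2 := by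
    have primal_ind : ∀ (i : ℕ) (ω : ℕ → Fin m),
        (∑ l ∈ Finset.Icc 1 i, (a l * (⟪x l ω, mvT A (ybar (l-1) ω) + c⟫ + r (x l ω))
            + (γ + σ * Aseq (l-1))/2 * ‖x l ω - x (l-1) ω‖^2))
          ≤ (∑ l ∈ Finset.Icc 1 i, a l * (⟪x i ω, mvT A (ybar (l-1) ω) + c⟫ + r (x i ω)))
            + γ / 2 * ‖x i ω - x0‖^2 := by
      intro i ω
      induction i with
      | zero =>
        have he : Finset.Icc 1 0 = (∅ : Finset ℕ) := by apply Finset.Icc_eq_empty; omega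
        rw [he, hx0 ω]
        simp
      | succ i ih =>
        rw [Finset.sum_Icc_succ_top (by omega : 1 ≤ i+1),
          Finset.sum_Icc_succ_top (by omega : 1 ≤ i+1)]
        have hexc := excess i ω (x (i+1) ω) (xmem (i+1) ω)
        simp only [Nat.add_sub_cancel]
        linarith [ih, hexc]
    intro ω
    have h1 := primal_ind k ω
    have h2 := excess k ω xstar hxstarX
    linarith [h1, h2]
  have path : ∀ ω : ℕ → Fin m,
      (∑ i ∈ Finset.Icc 1 k, a i * ((⟪c, x i ω⟫ + r (x i ω)) - (⟪c, xstar⟫ + r xstar)))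
        + (∑ i ∈ Finset.Icc 1 k, a i * ⟪ybar (i-1) ω, mv A (x i ω) - b⟫)
        + (∑ i ∈ Finset.Icc 1 k, (γ + σ * Aseq (i-1))/2 * ‖x i ω - x (i-1) ω‖^2)
        + (γ + σ * Aseq k)/2 * ‖xstar - x k ω‖^2
      ≤ γ/2 * ‖xstar - x0‖^2 := by
    intro ω
    have hterm : ∀ i ∈ Finset.Icc 1 k,
        a i * (⟪x i ω, mvT A (ybar (i-1) ω) + c⟫ + r (x i ω))
          = a i * (⟪xstar, mvT A (ybar (i-1) ω) + c⟫ + r xstar)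
            + (a i * ((⟪c, x i ω⟫ + r (x i ω)) - (⟪c, xstar⟫ + r xstar))
              + a i * ⟪ybar (i-1) ω, mv A (x i ω) - b⟫) := by
      intro i _
      have e1 : ⟪x i ω, mvT A (ybar (i-1) ω) + c⟫
          = ⟪ybar (i-1) ω, mv A (x i ω)⟫ + ⟪c, x i ω⟫ := by
        rw [inner_add_right, mvT_adj, real_inner_comm _ c]
      have e2 : ⟪xstar, mvT A (ybar (i-1) ω) + c⟫
          = ⟪ybar (i-1) ω, b⟫ + ⟪c, xstar⟫ := by
        rw [inner_add_right, mvT_adj, hfeas, real_inner_comm _ c]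
      have e3 : ⟪ybar (i-1) ω, mv A (x i ω) - b⟫
          = ⟪ybar (i-1) ω, mv A (x i ω)⟫ - ⟪ybar (i-1) ω, b⟫ := by
        rw [inner_sub_right]
      rw [e1, e2, e3]
      ring
    have hp := primal ω
    rw [Finset.sum_add_distrib, Finset.sum_congr rfl hterm, Finset.sum_add_distrib,
      Finset.sum_add_distrib] at hp
    linarith [hp]
  have dual : (∑ i ∈ Finset.Icc 1 k,
        a i * ∑ js : Fin k → Fin m, ⟪w - ybar (i-1) (pad hm k js), mv A (x i (pad hm k js)) - b⟫)
      ≤ (m:ℝ)^k * ‖w - y0‖^2/(2*γ)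
        + (∑ i ∈ Finset.Icc 2 k, (γ + σ * Aseq (i-1))/2
            * ∑ js : Fin k → Fin m, ‖x i (pad hm k js) - x (i-1) (pad hm k js)‖^2)
        + γ*m*(a k)^2/2 * ∑ js : Fin k → Fin m, ‖mv A (x k (pad hm k js)) - b‖^2 := by
    have hm0 : (m:ℝ) ≠ 0 := ne_of_gt hmR
    have h2γ : (2*γ) ≠ 0 := by positivity
    -- explicit dual update
    have upd_y : ∀ i, 1 ≤ i → ∀ ω : ℕ → Fin m,
        y i ω = y (i-1) ω + (γ * m * a i) • Pblk S (ω (i-1)) (mv A (x i ω) - b) := by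
      intro i hi ω
      ext l
      have hl := hyupd i hi ω l
      simp only [PiLp.add_apply, PiLp.smul_apply, smul_eq_mul]
      rw [hl]
      by_cases h : S l = ω (i-1)
      · rw [if_pos h]
        simp only [Pblk, if_pos h, PiLp.sub_apply]
        try ring
      · rw [if_neg h]
        simp only [Pblk, if_neg h]
        ring
    -- telescoping identity for each i
    have tele : ∀ i, 1 ≤ i → i ≤ k →
        a i * (∑ js : Fin k → Fin m,
            ⟪w - y (i-1) (pad hm k js), mv A (x i (pad hm k js)) - b⟫)
          = ((∑ js : Fin k → Fin m, ‖w - y (i-1) (pad hm k js)‖^2)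
              - (∑ js : Fin k → Fin m, ‖w - y i (pad hm k js)‖^2)
              + γ^2*(m:ℝ)*(a i)^2 * ∑ js : Fin k → Fin m, ‖mv A (x i (pad hm k js)) - b‖^2)
            / (2*γ) := by
      intro i hi1 hik
      have hi0lt : i - 1 < k := by omega
      set i0 : Fin k := ⟨i-1, hi0lt⟩ with hi0
      have hptw : ∀ js : Fin k → Fin m,
          ∑ j : Fin m, ‖w - y i (pad hm k (Function.update js i0 j))‖^2
            = (m:ℝ)*‖w - y (i-1) (pad hm k js)‖^2
              - 2*γ*(m:ℝ)*(a i)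
                * ⟪w - y (i-1) (pad hm k js), mv A (x i (pad hm k js)) - b⟫
              + γ^2*(m:ℝ)^2*(a i)^2*‖mv A (x i (pad hm k js)) - b‖^2 := by
        intro js
        have hxinv : ∀ j, x i (pad hm k (Function.update js i0 j)) = x i (pad hm k js) := by
          intro j
          refine (adapt i).1 _ _ fun t ht => ?_
          refine pad_update_ne hm js i0 j ?_
          show t ≠ (i0 : ℕ)
          simp only [hi0]
          omega
        have hyinv : ∀ j, y (i-1) (pad hm k (Function.update js i0 j))
            = y (i-1) (pad hm k js) := by
          intro j
          refine (adapt (i-1)).2.1 _ _ fun t ht => ?_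
          refine pad_update_ne hm js i0 j ?_
          show t ≠ (i0 : ℕ)
          simp only [hi0]
          omega
        have hyexp : ∀ j : Fin m, y i (pad hm k (Function.update js i0 j))
            = y (i-1) (pad hm k js)
              + (γ*(m:ℝ)*(a i)) • Pblk S j (mv A (x i (pad hm k js)) - b) := by
          intro j
          rw [upd_y i hi1, hyinv j, hxinv j]
          have hpu : pad hm k (Function.update js i0 j) (i-1) = j := by
            conv_lhs => rw [show i-1 = (i0:ℕ) from rfl]
            exact pad_update_self hm js i0 j
          rw [hpu]
        calc ∑ j : Fin m, ‖w - y i (pad hm k (Function.update js i0 j))‖^2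
            = ∑ j : Fin m, (‖w - y (i-1) (pad hm k js)‖^2
                - 2*(γ*(m:ℝ)*(a i)) * ⟪w - y (i-1) (pad hm k js),
                    Pblk S j (mv A (x i (pad hm k js)) - b)⟫
                + (γ*(m:ℝ)*(a i))^2 * ‖Pblk S j (mv A (x i (pad hm k js)) - b)‖^2) := by
              refine Finset.sum_congr rfl fun j _ => ?_
              rw [hyexp j]
              have hre : w - (y (i-1) (pad hm k js)
                  + (γ*(m:ℝ)*(a i)) • Pblk S j (mv A (x i (pad hm k js)) - b))
                  = (w - y (i-1) (pad hm k js))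
                    - (γ*(m:ℝ)*(a i)) • Pblk S j (mv A (x i (pad hm k js)) - b) := by
                abel
              rw [hre, norm_sub_sq_real, real_inner_smul_right, norm_smul, mul_pow,
                Real.norm_eq_abs, sq_abs]
              ring
        _ = (m:ℝ)*‖w - y (i-1) (pad hm k js)‖^2
              - 2*γ*(m:ℝ)*(a i)
                * ⟪w - y (i-1) (pad hm k js), mv A (x i (pad hm k js)) - b⟫
              + γ^2*(m:ℝ)^2*(a i)^2*‖mv A (x i (pad hm k js)) - b‖^2 := by
            rw [Finset.sum_add_distrib, Finset.sum_sub_distrib, Finset.sum_const,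
              Finset.card_univ, Fintype.card_fin, nsmul_eq_mul, ← Finset.mul_sum,
              ← Finset.mul_sum, sum_inner_Pblk, sum_normsq_Pblk]
            ring
      have hupdsum := sum_update i0 (fun js => ‖w - y i (pad hm k js)‖^2)
      rw [Finset.sum_congr rfl (fun js _ => hptw js)] at hupdsum
      rw [Finset.sum_add_distrib, Finset.sum_sub_distrib, ← Finset.mul_sum,
        ← Finset.mul_sum, ← Finset.mul_sum] at hupdsum
      rw [eq_div_iff h2γ]
      have key : (m:ℝ) * (a i * (∑ js : Fin k → Fin m,
            ⟪w - y (i-1) (pad hm k js), mv A (x i (pad hm k js)) - b⟫) * (2*γ))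
          = (m:ℝ) * ((∑ js : Fin k → Fin m, ‖w - y (i-1) (pad hm k js)‖^2)
              - (∑ js : Fin k → Fin m, ‖w - y i (pad hm k js)‖^2)
              + γ^2*(m:ℝ)*(a i)^2 * ∑ js : Fin k → Fin m,
                  ‖mv A (x i (pad hm k js)) - b‖^2) := by
        linear_combination -hupdsum
      exact mul_left_cancel₀ hm0 key
    -- explicit form of the dual increment along a path
    have zpath : ∀ i, 2 ≤ i → ∀ ω : ℕ → Fin m,
        y (i-1) ω - y (i-2) ω
          = (γ*(m:ℝ)*(a (i-1))) • Pblk S (ω (i-2)) (mv A (x (i-1) ω) - b) := by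
      intro i hi ω
      have h := upd_y (i-1) (by omega) ω
      have hi21 : i - 1 - 1 = i - 2 := by omega
      rw [hi21] at h
      rw [h, add_sub_cancel_left]
    -- expected value identities for the z terms
    have zfacts : ∀ i, 2 ≤ i → i ≤ k →
        ((∑ js : Fin k → Fin m, ⟪y (i-1) (pad hm k js) - y (i-2) (pad hm k js),
            mv A (x (i-1) (pad hm k js)) - b⟫)
          = γ * a (i-1) * ∑ js : Fin k → Fin m, ‖mv A (x (i-1) (pad hm k js)) - b‖^2)
        ∧ ((∑ js : Fin k → Fin m, ‖y (i-1) (pad hm k js) - y (i-2) (pad hm k js)‖^2)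
          = γ^2*(m:ℝ)*(a (i-1))^2
            * ∑ js : Fin k → Fin m, ‖mv A (x (i-1) (pad hm k js)) - b‖^2) := by
      intro i hi2 hik
      have hi0lt : i - 2 < k := by omega
      set i0 : Fin k := ⟨i-2, hi0lt⟩ with hi0
      have hxinv : ∀ (js : Fin k → Fin m) j,
          x (i-1) (pad hm k (Function.update js i0 j)) = x (i-1) (pad hm k js) := by
        intro js j
        refine (adapt (i-1)).1 _ _ fun t ht => ?_
        refine pad_update_ne hm js i0 j ?_
        show t ≠ (i0 : ℕ)
        simp only [hi0]
        omega
      have hzexp : ∀ (js : Fin k → Fin m) (j : Fin m),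
          y (i-1) (pad hm k (Function.update js i0 j))
              - y (i-2) (pad hm k (Function.update js i0 j))
            = (γ*(m:ℝ)*(a (i-1))) • Pblk S j (mv A (x (i-1) (pad hm k js)) - b) := by
        intro js j
        rw [zpath i hi2, hxinv js j]
        have hpu : pad hm k (Function.update js i0 j) (i-2) = j := by
          conv_lhs => rw [show i-2 = (i0:ℕ) from rfl]
          exact pad_update_self hm js i0 j
        rw [hpu]
      constructor
      · have hupdsum := sum_update i0 (fun js =>
          ⟪y (i-1) (pad hm k js) - y (i-2) (pad hm k js),
            mv A (x (i-1) (pad hm k js)) - b⟫)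
        have hptw : ∀ js : Fin k → Fin m,
            ∑ j : Fin m, ⟪y (i-1) (pad hm k (Function.update js i0 j))
                - y (i-2) (pad hm k (Function.update js i0 j)),
                mv A (x (i-1) (pad hm k (Function.update js i0 j))) - b⟫
              = γ*(m:ℝ)*(a (i-1)) * ‖mv A (x (i-1) (pad hm k js)) - b‖^2 := by
          intro js
          have hcongr : ∀ j : Fin m, ⟪y (i-1) (pad hm k (Function.update js i0 j))
                - y (i-2) (pad hm k (Function.update js i0 j)),
                mv A (x (i-1) (pad hm k (Function.update js i0 j))) - b⟫
              = γ*(m:ℝ)*(a (i-1)) * ⟪Pblk S j (mv A (x (i-1) (pad hm k js)) - b),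
                  mv A (x (i-1) (pad hm k js)) - b⟫ := by
            intro j
            rw [hzexp js j, hxinv js j, real_inner_smul_left]
          rw [Finset.sum_congr rfl (fun j _ => hcongr j), ← Finset.mul_sum]
          congr 1
          rw [Finset.sum_congr rfl (fun j (_ : j ∈ Finset.univ) => inner_Pblk_self S j _),
            sum_normsq_Pblk]
        rw [Finset.sum_congr rfl (fun js _ => hptw js), ← Finset.mul_sum] at hupdsum
        have key : (m:ℝ) * (∑ js : Fin k → Fin m,
              ⟪y (i-1) (pad hm k js) - y (i-2) (pad hm k js),
                mv A (x (i-1) (pad hm k js)) - b⟫)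
            = (m:ℝ) * (γ * a (i-1)
                * ∑ js : Fin k → Fin m, ‖mv A (x (i-1) (pad hm k js)) - b‖^2) := by
          linear_combination -hupdsum
        exact mul_left_cancel₀ hm0 key
      · have hupdsum := sum_update i0 (fun js =>
          ‖y (i-1) (pad hm k js) - y (i-2) (pad hm k js)‖^2)
        have hptw : ∀ js : Fin k → Fin m,
            ∑ j : Fin m, ‖y (i-1) (pad hm k (Function.update js i0 j))
                - y (i-2) (pad hm k (Function.update js i0 j))‖^2
              = γ^2*(m:ℝ)^2*(a (i-1))^2 * ‖mv A (x (i-1) (pad hm k js)) - b‖^2 := by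
          intro js
          have hcongr : ∀ j : Fin m, ‖y (i-1) (pad hm k (Function.update js i0 j))
                - y (i-2) (pad hm k (Function.update js i0 j))‖^2
              = (γ*(m:ℝ)*(a (i-1)))^2
                  * ‖Pblk S j (mv A (x (i-1) (pad hm k js)) - b)‖^2 := by
            intro j
            rw [hzexp js j, norm_smul, mul_pow, Real.norm_eq_abs, sq_abs]
          rw [Finset.sum_congr rfl (fun j _ => hcongr j), ← Finset.mul_sum,
            sum_normsq_Pblk]
          ring
        rw [Finset.sum_congr rfl (fun js _ => hptw js), ← Finset.mul_sum] at hupdsum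
        have key : (m:ℝ) * (∑ js : Fin k → Fin m,
              ‖y (i-1) (pad hm k js) - y (i-2) (pad hm k js)‖^2)
            = (m:ℝ) * (γ^2*(m:ℝ)*(a (i-1))^2
                * ∑ js : Fin k → Fin m, ‖mv A (x (i-1) (pad hm k js)) - b‖^2) := by
          linear_combination -hupdsum
        exact mul_left_cancel₀ hm0 key
    -- pathwise cross-term bound (Cauchy–Schwarz on the active block + Young)
    have cross : ∀ i, 2 ≤ i → ∀ ω : ℕ → Fin m,
        (m:ℝ) * a (i-1) * ⟪y (i-1) ω - y (i-2) ω, mv A (x (i-1) ω - x i ω)⟫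
          ≤ (γ + σ * Aseq (i-1))/2 * ‖x i ω - x (i-1) ω‖^2
            + ((m:ℝ)^2*(a (i-1))^2*Lhat^2/(2*(γ + σ*Aseq (i-1))))
              * ‖y (i-1) ω - y (i-2) ω‖^2 := by
      intro i hi ω
      have hrev : ‖x (i-1) ω - x i ω‖ = ‖x i ω - x (i-1) ω‖ := norm_sub_rev _ _
      have hz := zpath i hi ω
      have hsupp : ∀ l, S l ≠ ω (i-2) → (y (i-1) ω - y (i-2) ω) l = 0 := by
        intro l hl
        rw [hz]
        simp [Pblk, hl]
      have h1 : ⟪y (i-1) ω - y (i-2) ω, mv A (x (i-1) ω - x i ω)⟫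
          ≤ ‖y (i-1) ω - y (i-2) ω‖ * (Lhat * ‖x i ω - x (i-1) ω‖) := by
        rw [inner_Pblk_right S (ω (i-2)) _ _ hsupp]
        calc ⟪y (i-1) ω - y (i-2) ω, Pblk S (ω (i-2)) (mv A (x (i-1) ω - x i ω))⟫
            ≤ |⟪y (i-1) ω - y (i-2) ω, Pblk S (ω (i-2)) (mv A (x (i-1) ω - x i ω))⟫| :=
              le_abs_self _
        _ ≤ ‖y (i-1) ω - y (i-2) ω‖ * ‖Pblk S (ω (i-2)) (mv A (x (i-1) ω - x i ω))‖ :=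
              abs_real_inner_le_norm _ _
        _ ≤ ‖y (i-1) ω - y (i-2) ω‖ * (Lhat * ‖x i ω - x (i-1) ω‖) := by
              apply mul_le_mul_of_nonneg_left ?_ (norm_nonneg _)
              have h2 : ‖Pblk S (ω (i-2)) (mv A (x (i-1) ω - x i ω))‖
                  = Real.sqrt (∑ l ∈ Finset.univ.filter (fun l => S l = ω (i-2)),
                      (mv A (x (i-1) ω - x i ω) l)^2) := by
                rw [← normsq_Pblk, Real.sqrt_sq (norm_nonneg _)]
              rw [h2, ← hrev]
              exact hLhatBound (ω (i-2)) (x (i-1) ω - x i ω)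
      have step1 : (m:ℝ) * a (i-1) * ⟪y (i-1) ω - y (i-2) ω, mv A (x (i-1) ω - x i ω)⟫
          ≤ ((m:ℝ)*(a (i-1))*Lhat) * (‖y (i-1) ω - y (i-2) ω‖ * ‖x i ω - x (i-1) ω‖) := by
        have hmla : (0:ℝ) ≤ (m:ℝ) * a (i-1) := by
          have := anneg (i-1)
          positivity
        calc (m:ℝ) * a (i-1) * ⟪y (i-1) ω - y (i-2) ω, mv A (x (i-1) ω - x i ω)⟫
            ≤ (m:ℝ) * a (i-1) * (‖y (i-1) ω - y (i-2) ω‖ * (Lhat * ‖x i ω - x (i-1) ω‖)) := by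
              apply mul_le_mul_of_nonneg_left h1 hmla
        _ = ((m:ℝ)*(a (i-1))*Lhat) * (‖y (i-1) ω - y (i-2) ω‖ * ‖x i ω - x (i-1) ω‖) := by
              ring
      refine le_trans step1 ?_
      have h2mu : (0:ℝ) < 2*(γ + σ*Aseq (i-1)) := by linarith [mupos (i-1)]
      apply le_of_mul_le_mul_left ?_ h2mu
      have hre : 2*(γ + σ*Aseq (i-1)) * ((γ + σ*Aseq (i-1))/2 * ‖x i ω - x (i-1) ω‖^2
            + ((m:ℝ)^2*(a (i-1))^2*Lhat^2/(2*(γ + σ*Aseq (i-1))))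
              * ‖y (i-1) ω - y (i-2) ω‖^2)
          = (γ + σ*Aseq (i-1))^2 * ‖x i ω - x (i-1) ω‖^2
            + ((m:ℝ)*(a (i-1))*Lhat)^2 * ‖y (i-1) ω - y (i-2) ω‖^2 := by
        have hinv : 2*(γ + σ*Aseq (i-1)) * (2*(γ + σ*Aseq (i-1)))⁻¹ = 1 :=
          mul_inv_cancel₀ (ne_of_gt h2mu)
        linear_combination ((m:ℝ)^2*(a (i-1))^2*Lhat^2 * ‖y (i-1) ω - y (i-2) ω‖^2) * hinv
      rw [hre]
      nlinarith [sq_nonneg ((γ + σ*Aseq (i-1)) * ‖x i ω - x (i-1) ω‖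
        - ((m:ℝ)*(a (i-1))*Lhat) * ‖y (i-1) ω - y (i-2) ω‖)]
    -- coefficient comparison
    have hcoef : ∀ i, 2 ≤ i →
        ((m:ℝ)^2*(a (i-1))^2*Lhat^2/(2*(γ + σ*Aseq (i-1)))) * (γ^2*(m:ℝ)*(a (i-1))^2)
          ≤ (1/4)*γ*(m:ℝ)*(a (i-1))^2 := by
      intro i hi
      have hidx : i - 1 + 1 = i := by omega
      have hle : a (i-1) ≤ a i := by
        have := amono' (i-1) (by omega)
        rwa [hidx] at this
      have hle2 : (a (i-1))^2 ≤ (a i)^2 :=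
        pow_le_pow_left₀ (anneg (i-1)) hle 2
      have hmu := akey i (by omega)
      rw [hmu]
      have hai := apos i (by omega)
      rw [div_mul_eq_mul_div, div_le_iff₀ (by positivity)]
      have hfac : (0:ℝ) ≤ γ^2*Lhat^2*(m:ℝ)^3*(a (i-1))^2 := by positivity
      nlinarith [mul_le_mul_of_nonneg_left hle2 hfac]
    -- per-iteration bound for i ≥ 2
    have ibound : ∀ i, 2 ≤ i → i ≤ k →
        a i * (∑ js : Fin k → Fin m,
            ⟪w - ybar (i-1) (pad hm k js), mv A (x i (pad hm k js)) - b⟫)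
          ≤ ((∑ js : Fin k → Fin m, ‖w - y (i-1) (pad hm k js)‖^2)
              - (∑ js : Fin k → Fin m, ‖w - y i (pad hm k js)‖^2)
              + γ^2*(m:ℝ)*(a i)^2
                * ∑ js : Fin k → Fin m, ‖mv A (x i (pad hm k js)) - b‖^2)/(2*γ)
            + (γ + σ*Aseq (i-1))/2
              * ∑ js : Fin k → Fin m, ‖x i (pad hm k js) - x (i-1) (pad hm k js)‖^2
            - (3/4)*γ*(m:ℝ)*(a (i-1))^2
              * ∑ js : Fin k → Fin m, ‖mv A (x (i-1) (pad hm k js)) - b‖^2 := by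
      intro i hi2 hik
      have hidx : i - 1 + 1 = i := by omega
      have hi21 : i - 1 - 1 = i - 2 := by omega
      have hai := apos i (by omega)
      have hsplit : ∀ js : Fin k → Fin m,
          ⟪w - ybar (i-1) (pad hm k js), mv A (x i (pad hm k js)) - b⟫
            = ⟪w - y (i-1) (pad hm k js), mv A (x i (pad hm k js)) - b⟫
              - ((m:ℝ) * a (i-1) / a i)
                * ⟪y (i-1) (pad hm k js) - y (i-2) (pad hm k js),
                    mv A (x i (pad hm k js)) - b⟫ := by
        intro js
        have hb := hybar (i-1) (by omega) (pad hm k js)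
        rw [hidx, hi21] at hb
        rw [hb]
        have hre : w - (y (i-1) (pad hm k js)
            + ((m:ℝ) * a (i-1) / a i)
              • (y (i-1) (pad hm k js) - y (i-2) (pad hm k js)))
            = (w - y (i-1) (pad hm k js))
              - ((m:ℝ) * a (i-1) / a i)
                • (y (i-1) (pad hm k js) - y (i-2) (pad hm k js)) := by
          abel
        rw [hre, inner_sub_left, real_inner_smul_left]
      have hHsplit : ∀ js : Fin k → Fin m,
          ⟪y (i-1) (pad hm k js) - y (i-2) (pad hm k js), mv A (x i (pad hm k js)) - b⟫
            = ⟪y (i-1) (pad hm k js) - y (i-2) (pad hm k js),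
                mv A (x (i-1) (pad hm k js)) - b⟫
              - ⟪y (i-1) (pad hm k js) - y (i-2) (pad hm k js),
                  mv A (x (i-1) (pad hm k js) - x i (pad hm k js))⟫ := by
        intro js
        rw [← inner_sub_right]
        congr 1
        rw [mv_sub]
        abel
      have hptw : ∀ js : Fin k → Fin m,
          a i * ⟪w - ybar (i-1) (pad hm k js), mv A (x i (pad hm k js)) - b⟫
            = a i * ⟪w - y (i-1) (pad hm k js), mv A (x i (pad hm k js)) - b⟫
              - ((m:ℝ) * a (i-1)) * ⟪y (i-1) (pad hm k js) - y (i-2) (pad hm k js),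
                  mv A (x (i-1) (pad hm k js)) - b⟫
              + ((m:ℝ) * a (i-1)) * ⟪y (i-1) (pad hm k js) - y (i-2) (pad hm k js),
                  mv A (x (i-1) (pad hm k js) - x i (pad hm k js))⟫ := by
        intro js
        rw [hsplit js, hHsplit js]
        have hne : a i ≠ 0 := ne_of_gt hai
        field_simp
        ring
      rw [Finset.mul_sum, Finset.sum_congr rfl (fun js _ => hptw js),
        Finset.sum_add_distrib, Finset.sum_sub_distrib, ← Finset.mul_sum,
        ← Finset.mul_sum, ← Finset.mul_sum]
      have htele := tele i (by omega) hik
      have hz1 := (zfacts i hi2 hik).1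
      have hz2 := (zfacts i hi2 hik).2
      have hRHnn : (0:ℝ) ≤ ∑ js : Fin k → Fin m,
          ‖mv A (x (i-1) (pad hm k js)) - b‖^2 :=
        Finset.sum_nonneg fun js _ => sq_nonneg _
      have hcr : ((m:ℝ) * a (i-1)) * (∑ js : Fin k → Fin m,
            ⟪y (i-1) (pad hm k js) - y (i-2) (pad hm k js),
              mv A (x (i-1) (pad hm k js) - x i (pad hm k js))⟫)
          ≤ (γ + σ*Aseq (i-1))/2
              * ∑ js : Fin k → Fin m, ‖x i (pad hm k js) - x (i-1) (pad hm k js)‖^2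
            + (1/4)*γ*(m:ℝ)*(a (i-1))^2
              * ∑ js : Fin k → Fin m, ‖mv A (x (i-1) (pad hm k js)) - b‖^2 := by
        rw [Finset.mul_sum]
        have hstep := Finset.sum_le_sum
          (fun js (_ : js ∈ (Finset.univ : Finset (Fin k → Fin m))) =>
            cross i hi2 (pad hm k js))
        refine le_trans hstep ?_
        rw [Finset.sum_add_distrib, ← Finset.mul_sum, ← Finset.mul_sum, hz2]
        have h2 : ((m:ℝ)^2*(a (i-1))^2*Lhat^2/(2*(γ + σ*Aseq (i-1))))
            * (γ^2*(m:ℝ)*(a (i-1))^2 * ∑ js : Fin k → Fin m,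
                ‖mv A (x (i-1) (pad hm k js)) - b‖^2)
            ≤ (1/4)*γ*(m:ℝ)*(a (i-1))^2 * ∑ js : Fin k → Fin m,
                ‖mv A (x (i-1) (pad hm k js)) - b‖^2 := by
          rw [← mul_assoc]
          apply mul_le_mul_of_nonneg_right ?_ hRHnn
          exact hcoef i hi2
        linarith [h2]
      have hz1' : ((m:ℝ) * a (i-1)) * (∑ js : Fin k → Fin m,
            ⟪y (i-1) (pad hm k js) - y (i-2) (pad hm k js),
              mv A (x (i-1) (pad hm k js)) - b⟫)
          = ((m:ℝ) * a (i-1)) * (γ * a (i-1) * ∑ js : Fin k → Fin m,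
              ‖mv A (x (i-1) (pad hm k js)) - b‖^2) := by
        rw [hz1]
      linarith [htele, hcr, hz1']
    -- assemble the dual bound
    have h1notin : (1:ℕ) ∉ Finset.Icc 2 k := by simp
    have hsplitIcc : Finset.Icc 1 k = insert 1 (Finset.Icc 2 k) := by
      ext t
      simp only [Finset.mem_Icc, Finset.mem_insert]
      omega
    set F : ℕ → ℝ := fun t => ∑ js : Fin k → Fin m, ‖w - y t (pad hm k js)‖^2 with hF
    set R : ℕ → ℝ := fun t => ∑ js : Fin k → Fin m, ‖mv A (x t (pad hm k js)) - b‖^2 with hR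
    set Sd : ℕ → ℝ :=
      fun t => ∑ js : Fin k → Fin m, ‖x t (pad hm k js) - x (t-1) (pad hm k js)‖^2 with hSd
    have hterm1 : a 1 * (∑ js : Fin k → Fin m,
          ⟪w - ybar (1-1) (pad hm k js), mv A (x 1 (pad hm k js)) - b⟫)
        = (F (1-1) - F 1 + γ^2*(m:ℝ)*(a 1)^2 * R 1)/(2*γ) := by
      have hcongr : ∀ js : Fin k → Fin m,
          ⟪w - ybar (1-1) (pad hm k js), mv A (x 1 (pad hm k js)) - b⟫
            = ⟪w - y (1-1) (pad hm k js), mv A (x 1 (pad hm k js)) - b⟫ := by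
        intro js
        norm_num
        rw [hybar0, hy0]
      rw [Finset.sum_congr rfl (fun js _ => hcongr js)]
      exact tele 1 le_rfl hk
    have hRnn : ∀ t, 0 ≤ R t := fun t => Finset.sum_nonneg fun js _ => sq_nonneg _
    have hFnn : ∀ t, 0 ≤ F t := fun t => Finset.sum_nonneg fun js _ => sq_nonneg _
    have hF0 : F 0 = (m:ℝ)^k * ‖w - y0‖^2 := by
      rw [hF]
      simp only [hy0]
      rw [Finset.sum_const, Finset.card_univ, nsmul_eq_mul, Fintype.card_fun]
      simp only [Fintype.card_fin]
      push_cast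
      ring
    have hsum2 := Finset.sum_le_sum (fun i (hi : i ∈ Finset.Icc 2 k) =>
      ibound i (Finset.mem_Icc.1 hi).1 (Finset.mem_Icc.1 hi).2)
    calc (∑ i ∈ Finset.Icc 1 k, a i * ∑ js : Fin k → Fin m,
            ⟪w - ybar (i-1) (pad hm k js), mv A (x i (pad hm k js)) - b⟫)
        = a 1 * (∑ js : Fin k → Fin m,
              ⟪w - ybar (1-1) (pad hm k js), mv A (x 1 (pad hm k js)) - b⟫)
            + ∑ i ∈ Finset.Icc 2 k, a i * ∑ js : Fin k → Fin m,
                ⟪w - ybar (i-1) (pad hm k js), mv A (x i (pad hm k js)) - b⟫ := by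
          rw [hsplitIcc, Finset.sum_insert h1notin]
    _ ≤ (F (1-1) - F 1 + γ^2*(m:ℝ)*(a 1)^2 * R 1)/(2*γ)
          + ∑ i ∈ Finset.Icc 2 k, ((F (i-1) - F i + γ^2*(m:ℝ)*(a i)^2 * R i)/(2*γ)
              + (γ + σ*Aseq (i-1))/2 * Sd i - (3/4)*γ*(m:ℝ)*(a (i-1))^2 * R (i-1)) := by
          rw [hterm1]
          exact add_le_add_right hsum2 _
    _ = ∑ i ∈ Finset.Icc 1 k, (F (i-1) - F i + γ^2*(m:ℝ)*(a i)^2 * R i)/(2*γ)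
          + (∑ i ∈ Finset.Icc 2 k, (γ + σ*Aseq (i-1))/2 * Sd i)
          - ∑ i ∈ Finset.Icc 2 k, (3/4)*γ*(m:ℝ)*(a (i-1))^2 * R (i-1) := by
          rw [hsplitIcc, Finset.sum_insert h1notin, Finset.sum_sub_distrib,
            Finset.sum_add_distrib]
          ring
    _ ≤ (m:ℝ)^k * ‖w - y0‖^2/(2*γ)
          + (∑ i ∈ Finset.Icc 2 k, (γ + σ*Aseq (i-1))/2 * Sd i)
          + γ*(m:ℝ)*(a k)^2/2 * R k := by
          have e1 : ∑ i ∈ Finset.Icc 1 k, (F (i-1) - F i + γ^2*(m:ℝ)*(a i)^2 * R i)/(2*γ)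
              = ((∑ i ∈ Finset.Icc 1 k, (F (i-1) - F i))
                  + ∑ i ∈ Finset.Icc 1 k, γ^2*(m:ℝ)*(a i)^2 * R i)/(2*γ) := by
            rw [← Finset.sum_div, ← Finset.sum_add_distrib]
          have e2 : ∑ i ∈ Finset.Icc 1 k, (F (i-1) - F i) = F 0 - F k := sum_Icc_tel F k
          have e3 : (∑ i ∈ Finset.Icc 1 k, γ^2*(m:ℝ)*(a i)^2 * R i)/(2*γ)
              = ∑ i ∈ Finset.Icc 1 k, γ*(m:ℝ)*(a i)^2/2 * R i := by
            rw [Finset.sum_div]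
            refine Finset.sum_congr rfl fun i _ => ?_
            field_simp
          have e4 : ∑ i ∈ Finset.Icc 2 k, (3/4)*γ*(m:ℝ)*(a (i-1))^2 * R (i-1)
              = ∑ i ∈ Finset.Icc 1 (k-1), (3/4)*γ*(m:ℝ)*(a i)^2 * R i :=
            sum_Icc_two_shift (fun t => (3/4)*γ*(m:ℝ)*(a t)^2 * R t) k
          have e5 : ∑ i ∈ Finset.Icc 1 k, γ*(m:ℝ)*(a i)^2/2 * R i
              = ∑ i ∈ Finset.Icc 1 (k-1), γ*(m:ℝ)*(a i)^2/2 * R i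
                + γ*(m:ℝ)*(a k)^2/2 * R k :=
            sum_Icc_split_top (fun i => γ*(m:ℝ)*(a i)^2/2 * R i) k hk
          have e6 : ∑ i ∈ Finset.Icc 1 (k-1), γ*(m:ℝ)*(a i)^2/2 * R i
              ≤ ∑ i ∈ Finset.Icc 1 (k-1), (3/4)*γ*(m:ℝ)*(a i)^2 * R i := by
            refine Finset.sum_le_sum fun i _ => ?_
            have h0 : 0 ≤ γ*(m:ℝ)*(a i)^2 * R i := by
              have := hRnn i
              positivity
            nlinarith [h0]
          have e7 : (F 0 - F k)/(2*γ) ≤ (m:ℝ)^k * ‖w - y0‖^2/(2*γ) := by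
            apply (div_le_div_iff_of_pos_right (by positivity : (0:ℝ) < 2*γ)).mpr
            rw [← hF0]
            linarith [hFnn k]
          rw [e1, e2, add_div, e3, e4]
          linarith [e5, e6, e7]
  have absorb : ∀ ω : ℕ → Fin m,
      γ*m*(a k)^2/2 * ‖mv A (x k ω) - b‖^2
        ≤ (γ + σ * Aseq k)/2 * ‖xstar - x k ω‖^2 := by
    intro ω
    have hH : mv A (x k ω) - b = mv A (x k ω - xstar) := by rw [mv_sub, hfeas]
    have hn : ‖mv A (x k ω - xstar)‖^2 ≤ (m:ℝ) * (Lhat^2 * ‖x k ω - xstar‖^2) := by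
      rw [← sum_normsq_Pblk S (mv A (x k ω - xstar))]
      have hb : ∀ j : Fin m, ‖Pblk S j (mv A (x k ω - xstar))‖^2
          ≤ Lhat^2 * ‖x k ω - xstar‖^2 := by
        intro j
        have h1 := hLhatBound j (x k ω - xstar)
        have h2 : ‖Pblk S j (mv A (x k ω - xstar))‖
            = Real.sqrt (∑ i ∈ Finset.univ.filter (fun i => S i = j),
                (mv A (x k ω - xstar) i)^2) := by
          rw [← normsq_Pblk, Real.sqrt_sq (norm_nonneg _)]
        have h3 : ‖Pblk S j (mv A (x k ω - xstar))‖ ≤ Lhat * ‖x k ω - xstar‖ := by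
          rw [h2]; exact h1
        calc ‖Pblk S j (mv A (x k ω - xstar))‖^2 ≤ (Lhat * ‖x k ω - xstar‖)^2 :=
              pow_le_pow_left₀ (norm_nonneg _) h3 2
        _ = Lhat^2 * ‖x k ω - xstar‖^2 := by ring
      calc ∑ j : Fin m, ‖Pblk S j (mv A (x k ω - xstar))‖^2
          ≤ ∑ _j : Fin m, Lhat^2 * ‖x k ω - xstar‖^2 := Finset.sum_le_sum (fun j _ => hb j)
      _ = (m:ℝ) * (Lhat^2 * ‖x k ω - xstar‖^2) := by
          rw [Finset.sum_const, Finset.card_univ, Fintype.card_fin, nsmul_eq_mul]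
    rw [hH]
    have hrev : ‖xstar - x k ω‖^2 = ‖x k ω - xstar‖^2 := by
      rw [← norm_neg (xstar - x k ω)]; congr 1; abel
    rw [hrev, hkey k]
    have hak : a k ≤ a (k+1) := amono' k hk
    have hak0 : 0 ≤ a k := anneg k
    have c1 : γ*m*(a k)^2/2 * ‖mv A (x k ω - xstar)‖^2
        ≤ γ*m*(a k)^2/2 * ((m:ℝ) * (Lhat^2 * ‖x k ω - xstar‖^2)) := by
      apply mul_le_mul_of_nonneg_left hn (by positivity)
    have c2 : (a k)^2 ≤ (a (k+1))^2 := pow_le_pow_left₀ hak0 hak 2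
    have hpos : (0:ℝ) < γ*Lhat^2*(m:ℝ)^2 := by positivity
    calc γ*m*(a k)^2/2 * ‖mv A (x k ω - xstar)‖^2
        ≤ γ*m*(a k)^2/2 * ((m:ℝ) * (Lhat^2 * ‖x k ω - xstar‖^2)) := c1
    _ = (γ*Lhat^2*(m:ℝ)^2*(a k)^2/2) * ‖x k ω - xstar‖^2 := by ring
    _ ≤ (γ*Lhat^2*(m:ℝ)^2*(a (k+1))^2) * ‖x k ω - xstar‖^2 := by
        apply mul_le_mul_of_nonneg_right ?_ (sq_nonneg _)
        nlinarith [c2, hpos, sq_nonneg (a k)]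
    _ = 2*γ*Lhat^2*(m:ℝ)^2*(a (k+1))^2/2 * ‖x k ω - xstar‖^2 := by ring
  have hExt_sum : (∑ js : Fin k → Fin m, ∑ i ∈ Finset.Icc 1 k, a i • x i (pad hm k js))
      = ((m:ℝ)^k * Aseq k) • expVec hm k (fun ω => xt k ω) := by
    unfold expVec
    simp_rw [hxt k]
    rw [← Finset.smul_sum, smul_smul, smul_smul]
    have hc : (m:ℝ)^k * Aseq k * ((m:ℝ)^k)⁻¹ * (Aseq k)⁻¹ = 1 := by
      field_simp
    rw [hc, one_smul]
  have master_sum :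
      (∑ js : Fin k → Fin m, ∑ i ∈ Finset.Icc 1 k,
          a i * ((⟪c, x i (pad hm k js)⟫ + r (x i (pad hm k js))) - (⟪c, xstar⟫ + r xstar)))
        + (∑ js : Fin k → Fin m, ∑ i ∈ Finset.Icc 1 k,
            a i * ⟪w, mv A (x i (pad hm k js)) - b⟫)
      ≤ (m:ℝ)^k * (γ/2 * ‖xstar - x0‖^2 + ‖w - y0‖^2/(2*γ)) := by
    have hSm := Finset.sum_le_sum
      (fun (js : Fin k → Fin m) (_ : js ∈ Finset.univ) => path (pad hm k js))
    rw [Finset.sum_const, Finset.card_univ, nsmul_eq_mul, Fintype.card_fun] at hSm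
    simp only [Fintype.card_fin] at hSm
    push_cast at hSm
    rw [Finset.sum_add_distrib, Finset.sum_add_distrib, Finset.sum_add_distrib] at hSm
    -- rewrite dual's left side
    have hsplit : ∀ i ∈ Finset.Icc 1 k,
        a i * ∑ js : Fin k → Fin m, ⟪w - ybar (i-1) (pad hm k js), mv A (x i (pad hm k js)) - b⟫
          = (∑ js : Fin k → Fin m, a i * ⟪w, mv A (x i (pad hm k js)) - b⟫)
            - (∑ js : Fin k → Fin m,
                a i * ⟪ybar (i-1) (pad hm k js), mv A (x i (pad hm k js)) - b⟫) := by
      intro i _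
      rw [← Finset.sum_sub_distrib, Finset.mul_sum]
      refine Finset.sum_congr rfl fun js _ => ?_
      rw [inner_sub_left]
      ring
    rw [Finset.sum_congr rfl hsplit, Finset.sum_sub_distrib] at dual
    have hc1 : (∑ i ∈ Finset.Icc 1 k, ∑ js : Fin k → Fin m,
          a i * ⟪ybar (i-1) (pad hm k js), mv A (x i (pad hm k js)) - b⟫)
        = ∑ js : Fin k → Fin m, ∑ i ∈ Finset.Icc 1 k,
            a i * ⟪ybar (i-1) (pad hm k js), mv A (x i (pad hm k js)) - b⟫ :=
      Finset.sum_comm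
    have hc2 : (∑ i ∈ Finset.Icc 1 k, ∑ js : Fin k → Fin m,
          a i * ⟪w, mv A (x i (pad hm k js)) - b⟫)
        = ∑ js : Fin k → Fin m, ∑ i ∈ Finset.Icc 1 k,
            a i * ⟪w, mv A (x i (pad hm k js)) - b⟫ :=
      Finset.sum_comm
    rw [hc1, hc2] at dual
    -- the S3 term dominates the Icc 2 k sum
    have hS3 : (∑ i ∈ Finset.Icc 2 k, (γ + σ * Aseq (i-1))/2
          * ∑ js : Fin k → Fin m, ‖x i (pad hm k js) - x (i-1) (pad hm k js)‖^2)
        ≤ ∑ js : Fin k → Fin m, ∑ i ∈ Finset.Icc 1 k,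
            (γ + σ * Aseq (i-1))/2 * ‖x i (pad hm k js) - x (i-1) (pad hm k js)‖^2 := by
      have heq : ∀ i ∈ Finset.Icc 2 k, (γ + σ * Aseq (i-1))/2
            * ∑ js : Fin k → Fin m, ‖x i (pad hm k js) - x (i-1) (pad hm k js)‖^2
          = ∑ js : Fin k → Fin m,
              (γ + σ * Aseq (i-1))/2 * ‖x i (pad hm k js) - x (i-1) (pad hm k js)‖^2 := by
        intro i _
        rw [Finset.mul_sum]
      rw [Finset.sum_congr rfl heq, Finset.sum_comm]
      apply Finset.sum_le_sum
      intro js _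
      apply Finset.sum_le_sum_of_subset_of_nonneg
      · intro i hi
        rw [Finset.mem_Icc] at hi ⊢
        omega
      · intro i _ _
        have := mupos (i-1)
        positivity
    have hS4 : γ*(m:ℝ)*(a k)^2/2 * (∑ js : Fin k → Fin m, ‖mv A (x k (pad hm k js)) - b‖^2)
        ≤ ∑ js : Fin k → Fin m, (γ + σ * Aseq k)/2 * ‖xstar - x k (pad hm k js)‖^2 := by
      rw [Finset.mul_sum]
      exact Finset.sum_le_sum (fun js _ => absorb (pad hm k js))
    have hrhs : (m:ℝ)^k * (γ/2 * ‖xstar - x0‖^2 + ‖w - y0‖^2/(2*γ))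
        = (m:ℝ)^k * (γ/2 * ‖xstar - x0‖^2) + (m:ℝ)^k * ‖w - y0‖^2/(2*γ) := by
      ring
    rw [hrhs]
    linarith [hSm, dual, hS3, hS4]
  have jensen : expVec hm k (fun ω => xt k ω) ∈ X ∧
      ((m:ℝ)^k * Aseq k) * (⟪c, expVec hm k (fun ω => xt k ω)⟫ + r (expVec hm k (fun ω => xt k ω)))
        ≤ ∑ js : Fin k → Fin m, ∑ i ∈ Finset.Icc 1 k,
            a i * (⟪c, x i (pad hm k js)⟫ + r (x i (pad hm k js))) := by
    have hconvf : ConvexOn ℝ Set.univ (fun z : EuclideanSpace ℝ (Fin d) => ⟪c, z⟫ + r z) := by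
      refine ConvexOn.add ⟨convex_univ, ?_⟩ hrconv
      intro p _ q _ t s ht hs hts
      refine le_of_eq ?_
      rw [inner_add_right, real_inner_smul_right, real_inner_smul_right]
      simp [smul_eq_mul]
    set T : Finset ((Fin k → Fin m) × ℕ) := Finset.univ ×ˢ Finset.Icc 1 k with hT
    set wgt : (Fin k → Fin m) × ℕ → ℝ := fun p => a p.2 with hwgt
    set pts : (Fin k → Fin m) × ℕ → EuclideanSpace ℝ (Fin d) :=
      fun p => x p.2 (pad hm k p.1) with hpts
    have hw : ∀ p ∈ T, 0 ≤ wgt p := fun p _ => anneg p.2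
    have hSw : ∑ p ∈ T, wgt p = (m:ℝ)^k * Aseq k := by
      rw [hT, Finset.sum_product]
      simp only [hwgt]
      rw [Finset.sum_const, Finset.card_univ, nsmul_eq_mul, Fintype.card_fun,
        Fintype.card_fin, Fintype.card_fin, ← hAeq k]
      push_cast
      ring
    have hposW : 0 < ∑ p ∈ T, wgt p := by rw [hSw]; positivity
    have hmemX : ∀ p ∈ T, pts p ∈ X := fun p _ => xmem p.2 _
    have hsum_prod : ∑ p ∈ T, wgt p • pts p
        = ∑ js : Fin k → Fin m, ∑ i ∈ Finset.Icc 1 k, a i • x i (pad hm k js) := by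
      rw [hT, Finset.sum_product]
    have hcm : T.centerMass wgt pts = expVec hm k (fun ω => xt k ω) := by
      rw [Finset.centerMass, hSw, hsum_prod, hExt_sum, smul_smul]
      have hc : ((m:ℝ)^k * Aseq k)⁻¹ * ((m:ℝ)^k * Aseq k) = 1 := by
        field_simp
      rw [hc, one_smul]
    constructor
    · rw [← hcm]
      exact Convex.centerMass_mem hXconv hw hposW hmemX
    · have hle := hconvf.map_centerMass_le hw hposW (fun p _ => Set.mem_univ (pts p))
      rw [hcm] at hle
      have hle2 : ((m:ℝ)^k * Aseq k) * (⟪c, expVec hm k (fun ω => xt k ω)⟫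
            + r (expVec hm k (fun ω => xt k ω)))
          ≤ ((m:ℝ)^k * Aseq k) * T.centerMass wgt
              ((fun z : EuclideanSpace ℝ (Fin d) => ⟪c, z⟫ + r z) ∘ pts) := by
        apply mul_le_mul_of_nonneg_left hle (by positivity)
      refine le_trans hle2 (le_of_eq ?_)
      rw [Finset.centerMass, hSw, smul_eq_mul, ← mul_assoc,
        mul_inv_cancel₀ (by positivity : ((m:ℝ)^k * Aseq k) ≠ 0), one_mul]
      rw [hT, Finset.sum_product]
      simp [hwgt, hpts, smul_eq_mul]
  have vec_id : (∑ js : Fin k → Fin m, ∑ i ∈ Finset.Icc 1 k,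
        a i * ⟪w, mv A (x i (pad hm k js)) - b⟫)
      = ((m:ℝ)^k * Aseq k) * ⟪w, mv A (expVec hm k (fun ω => xt k ω)) - b⟫ := by
    have hinner : ∀ js : Fin k → Fin m,
        ∑ i ∈ Finset.Icc 1 k, a i * ⟪w, mv A (x i (pad hm k js)) - b⟫
          = ⟪w, ∑ i ∈ Finset.Icc 1 k, a i • (mv A (x i (pad hm k js)) - b)⟫ := by
      intro js
      rw [inner_sum]
      exact Finset.sum_congr rfl fun i _ => (real_inner_smul_right _ _ _).symm
    rw [Finset.sum_congr rfl (fun js _ => hinner js), ← inner_sum]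
    have hVec : (∑ js : Fin k → Fin m, ∑ i ∈ Finset.Icc 1 k,
          a i • (mv A (x i (pad hm k js)) - b))
        = ((m:ℝ)^k * Aseq k) • (mv A (expVec hm k (fun ω => xt k ω)) - b) := by
      have h1 : ∀ js : Fin k → Fin m, ∑ i ∈ Finset.Icc 1 k,
            a i • (mv A (x i (pad hm k js)) - b)
          = mv A (∑ i ∈ Finset.Icc 1 k, a i • x i (pad hm k js)) - Aseq k • b := by
        intro js
        rw [mv_sum]
        simp_rw [smul_sub, mv_smul]
        rw [Finset.sum_sub_distrib, ← Finset.sum_smul, ← hAeq k]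
      rw [Finset.sum_congr rfl (fun js _ => h1 js), Finset.sum_sub_distrib, ← mv_sum,
        hExt_sum, mv_smul, Finset.sum_const, Finset.card_univ, smul_sub]
      congr 1
      rw [← Nat.cast_smul_eq_nsmul ℝ, smul_smul]
      congr 1
      rw [Fintype.card_fun]
      push_cast
      simp
    rw [hVec, real_inner_smul_right]
  refine ⟨jensen.1, ?_⟩
  have hmk : (0:ℝ) < (m:ℝ)^k := by positivity
  have expand : ∀ js : Fin k → Fin m,
      ∑ i ∈ Finset.Icc 1 k,
          a i * ((⟪c, x i (pad hm k js)⟫ + r (x i (pad hm k js))) - (⟪c, xstar⟫ + r xstar))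
        = (∑ i ∈ Finset.Icc 1 k, a i * (⟪c, x i (pad hm k js)⟫ + r (x i (pad hm k js))))
          - Aseq k * (⟪c, xstar⟫ + r xstar) := by
    intro js
    rw [hAeq k, Finset.sum_mul]
    rw [← Finset.sum_sub_distrib]
    refine Finset.sum_congr rfl fun i _ => by ring
  rw [Finset.sum_congr rfl (fun js _ => expand js), Finset.sum_sub_distrib,
    Finset.sum_const, Finset.card_univ] at master_sum
  have hcard : (Fintype.card (Fin k → Fin m) : ℝ) = (m:ℝ)^k := by
    rw [Fintype.card_fun]
    simp
  rw [vec_id] at master_sum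
  have h1 := jensen.2
  rw [nsmul_eq_mul, hcard] at master_sum
  have goal' : ((m:ℝ)^k * Aseq k) * ((⟪c, expVec hm k (fun ω => xt k ω)⟫
      + r (expVec hm k (fun ω => xt k ω)) - (⟪c, xstar⟫ + r xstar))
      + ⟪w, mv A (expVec hm k (fun ω => xt k ω)) - b⟫)
      ≤ (m:ℝ)^k * (γ/2 * ‖xstar - x0‖^2 + ‖w - y0‖^2/(2*γ)) := by
    nlinarith [h1, master_sum]
  rw [show ((m:ℝ)^k * Aseq k) * ((⟪c, expVec hm k (fun ω => xt k ω)⟫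
      + r (expVec hm k (fun ω => xt k ω)) - (⟪c, xstar⟫ + r xstar))
      + ⟪w, mv A (expVec hm k (fun ω => xt k ω)) - b⟫)
      = (m:ℝ)^k * (Aseq k * ((⟪c, expVec hm k (fun ω => xt k ω)⟫
      + r (expVec hm k (fun ω => xt k ω)) - (⟪c, xstar⟫ + r xstar))
      + ⟪w, mv A (expVec hm k (fun ω => xt k ω)) - b⟫)) from by ring] at goal'
  exact le_of_mul_le_mul_left goal' hmk

end CLVR

/-- Corollary (objective/feasibility guarantees of CLVR): with `y₀ = 0`, `u = x*` and
`v` determined by `‖A E[x̃_k] − b‖ · v = ‖y*‖ (A E[x̃_k] − b)`, for all `k ≥ 1` one has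
`‖A E[x̃_k] − b‖·‖y*‖ ≤ (γ‖u − x₀‖² + 4‖v − y₀‖²/γ)/(2A_k)` and the two-sided bound on
`(cᵀE[x̃_k] + r(E[x̃_k])) − (cᵀx* + r(x*))`. -/
theorem clvr_objective_constraint_bounds
    (n d m : ℕ) (hm : 0 < m)
    (A : Matrix (Fin n) (Fin d) ℝ) (b : EuclideanSpace ℝ (Fin n))
    (c : EuclideanSpace ℝ (Fin d))
    (X : Set (EuclideanSpace ℝ (Fin d)))
    (hXne : X.Nonempty) (hXc : IsClosed X) (hXconv : Convex ℝ X)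
    (r : EuclideanSpace ℝ (Fin d) → ℝ) (σ : ℝ) (hσ : 0 ≤ σ)
    (hrconv : ConvexOn ℝ Set.univ r) (hrstrong : StrongConvexOn X σ r)
    -- the partition of the rows into m blocks
    (S : Fin n → Fin m) (hS : Function.Surjective S)
    (Lhat : ℝ) (hLhat : 0 < Lhat)
    (hLhatBound : ∀ (j : Fin m) (x : EuclideanSpace ℝ (Fin d)),
      Real.sqrt (∑ i ∈ Finset.univ.filter (fun i => S i = j), (mv A x i) ^ 2) ≤ Lhat * ‖x‖)
    (γ : ℝ) (hγ : 0 < γ)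
    -- the Lagrangian
    (Lag : EuclideanSpace ℝ (Fin d) → EuclideanSpace ℝ (Fin n) → ℝ)
    (hLag : ∀ x y, Lag x y = ⟪c, x⟫ + r x + ⟪y, mv A x⟫ - ⟪y, b⟫)
    -- a saddle point
    (xstar : EuclideanSpace ℝ (Fin d)) (ystar : EuclideanSpace ℝ (Fin n))
    (hxstarX : xstar ∈ X)
    (hsaddle : ∀ x ∈ X, ∀ y : EuclideanSpace ℝ (Fin n),
      Lag xstar y ≤ Lag xstar ystar ∧ Lag xstar ystar ≤ Lag x ystar)
    -- step sizes
    (a Aseq : ℕ → ℝ)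
    (ha0 : a 0 = 0) (hA0 : Aseq 0 = 0)
    (ha1 : a 1 = 1 / (Real.sqrt 2 * Lhat * m))
    (harec : ∀ k, 1 ≤ k →
      a (k + 1) = Real.sqrt (1 + σ * Aseq k / γ) / (Real.sqrt 2 * Lhat * m))
    (hArec : ∀ k, Aseq (k + 1) = Aseq k + a (k + 1))
    -- the iterates, as functions of the sequence ω of random block indices
    -- (ω (k-1) is the index j_k ∈ [m] drawn at iteration k)
    (x : ℕ → (ℕ → Fin m) → EuclideanSpace ℝ (Fin d))
    (y ybar : ℕ → (ℕ → Fin m) → EuclideanSpace ℝ (Fin n))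
    (x0 : EuclideanSpace ℝ (Fin d)) (y0 : EuclideanSpace ℝ (Fin n))
    (hx0X : x0 ∈ X) (hx0 : ∀ ω, x 0 ω = x0)
    (hy0 : ∀ ω, y 0 ω = y0) (hybar0 : ∀ ω, ybar 0 ω = y0)
    (hy0zero : y0 = 0)
    -- primal update: x_k is the minimizer over X of the dual-averaging objective
    (hxmin : ∀ k, 1 ≤ k → ∀ ω, x k ω ∈ X ∧ ∀ x' ∈ X,
      ((∑ i ∈ Finset.Icc 1 k, a i * (⟪x k ω, mvT A (ybar (i - 1) ω) + c⟫ + r (x k ω)))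
          + γ / 2 * ‖x k ω - x0‖ ^ 2)
        ≤ ((∑ i ∈ Finset.Icc 1 k, a i * (⟪x', mvT A (ybar (i - 1) ω) + c⟫ + r x'))
          + γ / 2 * ‖x' - x0‖ ^ 2))
    -- dual update on the randomly drawn block j_k = ω (k-1)
    (hyupd : ∀ k, 1 ≤ k → ∀ ω, ∀ i : Fin n,
      y k ω i = if S i = ω (k - 1)
        then y (k - 1) ω i + γ * m * a k * (mv A (x k ω) i - b i)
        else y (k - 1) ω i)
    -- dual extrapolation
    (hybar : ∀ k, 1 ≤ k → ∀ ω,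
      ybar k ω = y k ω + (m * a k / a (k + 1)) • (y k ω - y (k - 1) ω))
    -- averaged iterates
    (xt : ℕ → (ℕ → Fin m) → EuclideanSpace ℝ (Fin d))
    (yt : ℕ → (ℕ → Fin m) → EuclideanSpace ℝ (Fin n))
    (hxt : ∀ k ω, xt k ω = (Aseq k)⁻¹ • ∑ i ∈ Finset.Icc 1 k, a i • x i ω)
    (hyt : ∀ k ω, yt k ω = (Aseq k)⁻¹ •
      ∑ i ∈ Finset.Icc 1 k,
        (a i • y i ω + (((m : ℝ) - 1) * a i) • (y i ω - y (i - 1) ω))) :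
    ∀ k : ℕ, 1 ≤ k →
      mv A (expVec hm k (fun ω => xt k ω)) ≠ b →
      ∀ v : EuclideanSpace ℝ (Fin n),
        ‖mv A (expVec hm k (fun ω => xt k ω)) - b‖ • v
            = ‖ystar‖ • (mv A (expVec hm k (fun ω => xt k ω)) - b) →
        (‖mv A (expVec hm k (fun ω => xt k ω)) - b‖ * ‖ystar‖
            ≤ (γ * ‖xstar - x0‖ ^ 2 + 4 * ‖v - y0‖ ^ 2 / γ) / (2 * Aseq k)) ∧
        (-((γ * ‖xstar - x0‖ ^ 2 + 4 * ‖v - y0‖ ^ 2 / γ) / (2 * Aseq k))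
            ≤ (⟪c, expVec hm k (fun ω => xt k ω)⟫ + r (expVec hm k (fun ω => xt k ω)))
              - (⟪c, xstar⟫ + r xstar)) ∧
        ((⟪c, expVec hm k (fun ω => xt k ω)⟫ + r (expVec hm k (fun ω => xt k ω)))
              - (⟪c, xstar⟫ + r xstar)
            ≤ (γ * ‖xstar - x0‖ ^ 2 + 4 * ‖v - y0‖ ^ 2 / γ) / Aseq k) := by
  intro k hk hne v hveq
  -- feasibility of the saddle point
  have hfeas : mv A xstar = b := by
    have h := (hsaddle xstar hxstarX (ystar + (mv A xstar - b))).1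
    rw [hLag, hLag] at h
    rw [inner_add_left, inner_add_left] at h
    have hsub : ⟪mv A xstar - b, mv A xstar⟫ - ⟪mv A xstar - b, b⟫
        = ⟪mv A xstar - b, mv A xstar - b⟫ := (inner_sub_right _ _ _).symm
    have h2 : ⟪mv A xstar - b, mv A xstar - b⟫ ≤ 0 := by linarith [h, hsub]
    rw [real_inner_self_eq_norm_sq] at h2
    have h3 : ‖mv A xstar - b‖^2 = 0 := le_antisymm h2 (sq_nonneg _)
    have h4 : ‖mv A xstar - b‖ = 0 := by
      exact pow_eq_zero_iff (by norm_num) |>.1 h3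
    have h5 := norm_eq_zero.1 h4
    exact sub_eq_zero.1 h5
  obtain ⟨hExtX, hM⟩ := CLVR.clvr_master n d m hm A b c X hXconv r σ hσ hrconv hrstrong
    S Lhat hLhat hLhatBound γ hγ xstar hxstarX hfeas a Aseq ha0 hA0 ha1 harec hArec
    x y ybar x0 y0 hx0X hx0 hy0 hybar0 hxmin hyupd hybar xt hxt k hk ((2:ℝ)•v)
  obtain ⟨hAnn, hapos, hkey, hamono⟩ :=
    CLVR.step_facts hm hσ hγ hLhat hA0 ha1 harec hArec
  have hAk : 0 < Aseq k := by
    obtain ⟨j, rfl⟩ : ∃ j, k = j + 1 := ⟨k - 1, by omega⟩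
    have h1 := hapos j
    have h2 := hAnn j
    rw [hArec j]
    linarith
  -- v facts
  have hbne : mv A (expVec hm k (fun ω => xt k ω)) - b ≠ 0 := sub_ne_zero.2 hne
  have hnb : ‖mv A (expVec hm k (fun ω => xt k ω)) - b‖ ≠ 0 := norm_ne_zero_iff.2 hbne
  have hvinner : ⟪v, mv A (expVec hm k (fun ω => xt k ω)) - b⟫
      = ‖ystar‖ * ‖mv A (expVec hm k (fun ω => xt k ω)) - b‖ := by
    have h1 := congrArg (fun z => ⟪z, mv A (expVec hm k (fun ω => xt k ω)) - b⟫) hveq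
    simp only [real_inner_smul_left] at h1
    rw [real_inner_self_eq_norm_sq] at h1
    apply mul_left_cancel₀ hnb
    rw [h1]
    ring
  have hvnorm : ‖v‖ = ‖ystar‖ := by
    have h1 := congrArg norm hveq
    rw [norm_smul, norm_smul, Real.norm_eq_abs, Real.norm_eq_abs,
      abs_of_nonneg (norm_nonneg _), abs_of_nonneg (norm_nonneg _)] at h1
    apply mul_left_cancel₀ hnb
    rw [h1]
    ring
  -- saddle inequality at the averaged point
  have hsad2 : ⟪c, xstar⟫ + r xstar
      ≤ ⟪c, expVec hm k (fun ω => xt k ω)⟫ + r (expVec hm k (fun ω => xt k ω))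
        + ⟪ystar, mv A (expVec hm k (fun ω => xt k ω)) - b⟫ := by
    have h2 := (hsaddle (expVec hm k (fun ω => xt k ω)) hExtX ystar).2
    rw [hLag, hLag, hfeas] at h2
    have hsub : ⟪ystar, mv A (expVec hm k (fun ω => xt k ω))⟫ - ⟪ystar, b⟫
        = ⟪ystar, mv A (expVec hm k (fun ω => xt k ω)) - b⟫ := (inner_sub_right _ _ _).symm
    linarith [h2, hsub]
  have hCS : -(‖ystar‖ * ‖mv A (expVec hm k (fun ω => xt k ω)) - b‖)
      ≤ ⟪ystar, mv A (expVec hm k (fun ω => xt k ω)) - b⟫ := by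
    have h1 := abs_real_inner_le_norm ystar (mv A (expVec hm k (fun ω => xt k ω)) - b)
    have h2 := neg_abs_le ⟪ystar, mv A (expVec hm k (fun ω => xt k ω)) - b⟫
    linarith
  -- notation
  set g : ℝ := (⟪c, expVec hm k (fun ω => xt k ω)⟫ + r (expVec hm k (fun ω => xt k ω)))
      - (⟪c, xstar⟫ + r xstar) with hg
  set t : ℝ := ‖mv A (expVec hm k (fun ω => xt k ω)) - b‖ * ‖ystar‖ with ht
  have htnn : 0 ≤ t := by
    rw [ht]; positivity
  have hgget : -t ≤ g := by
    rw [hg, ht]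
    have h1 := abs_real_inner_le_norm ystar (mv A (expVec hm k (fun ω => xt k ω)) - b)
    have h2 := le_abs_self ⟪ystar, mv A (expVec hm k (fun ω => xt k ω)) - b⟫
    nlinarith [hsad2, h1, h2]
  -- master inequality with w = 2v
  have hM2 : Aseq k * (g + 2*t) ≤ γ/2 * ‖xstar - x0‖^2 + 4*‖v - y0‖^2/(2*γ) := by
    have hw : ⟪(2:ℝ)•v, mv A (expVec hm k (fun ω => xt k ω)) - b⟫
        = 2 * (‖ystar‖ * ‖mv A (expVec hm k (fun ω => xt k ω)) - b‖) := by
      rw [real_inner_smul_left, hvinner]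
    have hwn : ‖(2:ℝ)•v - y0‖^2 = 4*‖v - y0‖^2 := by
      rw [hy0zero, sub_zero, sub_zero, norm_smul, Real.norm_eq_abs]
      rw [mul_pow, sq_abs]
      norm_num
    rw [hw] at hM
    rw [hwn] at hM
    rw [hg, ht]
    have heq : (⟪c, expVec hm k (fun ω => xt k ω)⟫ + r (expVec hm k (fun ω => xt k ω))
          - (⟪c, xstar⟫ + r xstar))
        + 2*(‖mv A (expVec hm k (fun ω => xt k ω)) - b‖ * ‖ystar‖)
        = (⟪c, expVec hm k (fun ω => xt k ω)⟫ + r (expVec hm k (fun ω => xt k ω))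
          - (⟪c, xstar⟫ + r xstar))
          + 2 * (‖ystar‖ * ‖mv A (expVec hm k (fun ω => xt k ω)) - b‖) := by
      ring
    rw [heq]
    exact hM
  have hNpos : 0 ≤ γ * ‖xstar - x0‖^2 + 4*‖v - y0‖^2/γ := by positivity
  have h2Ak : (0:ℝ) < 2 * Aseq k := by linarith
  have hAg : Aseq k * g ≥ Aseq k * (-t) :=
    mul_le_mul_of_nonneg_left hgget (le_of_lt hAk)
  -- (i)
  have hi : t ≤ (γ * ‖xstar - x0‖^2 + 4*‖v - y0‖^2/γ)/(2*Aseq k) := by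
    rw [le_div_iff₀ h2Ak]
    have hexp : t * (2*Aseq k) = 2*(Aseq k * (g + 2*t)) - 2*(Aseq k * g) - 2*(Aseq k * t) := by
      ring
    have hAt : Aseq k * (-t) = -(Aseq k * t) := by ring
    rw [hAt] at hAg
    have hE : 2*(γ/2 * ‖xstar - x0‖^2 + 4*‖v - y0‖^2/(2*γ))
        = γ * ‖xstar - x0‖^2 + 4*‖v - y0‖^2/γ := by
      field_simp
    nlinarith [hM2, hAg, mul_nonneg (le_of_lt hAk) htnn]
  refine ⟨hi, ?_, ?_⟩
  · -- (ii)
    have : -((γ * ‖xstar - x0‖^2 + 4*‖v - y0‖^2/γ)/(2*Aseq k)) ≤ -t := by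
      linarith [hi]
    linarith [hgget, this]
  · -- (iii)
    rw [le_div_iff₀ hAk]
    have hE : 2*(γ/2 * ‖xstar - x0‖^2 + 4*‖v - y0‖^2/(2*γ))
        = γ * ‖xstar - x0‖^2 + 4*‖v - y0‖^2/γ := by
      field_simp
    nlinarith [hM2, mul_nonneg (le_of_lt hAk) htnn, hNpos]
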